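/- arXiv:1707.06129 — 3 statements merged into one kernel-verified Lean document; each statement's English description precedes it below -/
import Mathlib

section
/- Assume Hypotheses 1–3. Then there exists a function V : 𝕏 × ℝ → [0,∞), not identically zero, such that: (1) (harmonicity) for every (x,y) ∈ 𝕏 × ℝ and every n ≥ 1, 𝔼_x( V(X_n, y+S_n) ; τ_y > n ) = V(x,y); (2) for every x ∈ 𝕏 the function y ↦ V(x,y) is non-decreasing, and there exists c > 0 such that V(x,y) ≤ c(1 + max(y,0)) for all (x,y); (3) for every δ ∈ (0,1) there exists c_δ > 0 such that (1−δ)·max(y,0) − c_δ ≤ V(x,y) ≤ (1+δ)·max(y,0) + c_δ for all (x,y) ∈ 𝕏 × ℝ. -/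
open Finset Filter Real Topology MeasureTheory

namespace CLLT

variable {X : Type*}

/-- Product of the transition weights along a path. -/
noncomputable def wt (P : X → X → ℝ) : X → List X → ℝ
  | _, [] => 1
  | x, y :: ys => P x y * wt P y ys

/-- Extension of a finite path `X₁, …, Xₙ` to a trajectory `ℕ → X` with `X₀ = x`
(values beyond time `n` are irrelevant and set to `x`). -/
def pathExt (x : X) {n : ℕ} (path : Fin n → X) : ℕ → X := fun k =>
  if h : 1 ≤ k ∧ k ≤ n then path ⟨k - 1, by omega⟩ else x

/-- Expectation `𝔼_x (F (X₀, X₁, …))` of a functional of the first `n` steps of the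
Markov chain with transition kernel `P` started at `X₀ = x`. -/
noncomputable def Ex [Fintype X] (P : X → X → ℝ) (x : X) (n : ℕ)
    (F : (ℕ → X) → ℝ) : ℝ :=
  ∑ path : Fin n → X, wt P x (List.ofFn path) * F (pathExt x path)

open Classical in
/-- Real-valued indicator of a proposition. -/
noncomputable def ind (p : Prop) : ℝ := if p then 1 else 0

/-- Partial sum `S_k = f(X₁) + ⋯ + f(X_k)` along a trajectory. -/
noncomputable def Spath (f : X → ℝ) (ω : ℕ → X) (k : ℕ) : ℝ :=
  ∑ i ∈ Finset.Icc 1 k, f (ω i)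

/-- The event `τ_y > n`, i.e. `y + S_k > 0` for all `k = 1, …, n`. -/
def survives (f : X → ℝ) (y : ℝ) (n : ℕ) (ω : ℕ → X) : Prop :=
  ∀ k ∈ Finset.Icc 1 n, 0 < y + Spath f ω k

/-- `n`-step transition kernel. -/
noncomputable def kpow [Fintype X] [DecidableEq X] (P : X → X → ℝ) : ℕ → X → X → ℝ
  | 0 => fun x x' => if x = x' then 1 else 0
  | n + 1 => fun x x' => ∑ y, P x y * kpow P n y x'

/-- Transition operator acting on functions. -/
noncomputable def Pop [Fintype X] (P : X → X → ℝ) (g : X → ℝ) (x : X) : ℝ :=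
  ∑ x', P x x' * g x'

/-- Asymptotic variance `σ² = ν(f²) + 2 ∑_{n ≥ 1} ν(f ⬝ Pⁿ f)`. -/
noncomputable def sigma2 [Fintype X] (P : X → X → ℝ) (ν f : X → ℝ) : ℝ :=
  (∑ x, f x ^ 2 * ν x) + 2 * ∑' n : ℕ, ∑ x, f x * ((Pop P)^[n + 1] f) x * ν x

/-- Hypothesis 1 (primitivity). -/
def Primitive [Fintype X] [DecidableEq X] (P : X → X → ℝ) : Prop :=
  ∃ k₀ : ℕ, 1 ≤ k₀ ∧ ∀ x x', 0 < kpow P k₀ x x'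

/-- Hypothesis 3 (non-lattice condition). -/
def NonLattice [Fintype X] (P : X → X → ℝ) (f : X → ℝ) : Prop :=
  ∀ θ a : ℝ, ∃ (n : ℕ) (g : Fin (n + 1) → X),
    (0 < ∏ i : Fin (n + 1), P (g i) (g (i + 1))) ∧
    ∀ m : ℤ, (∑ i, f (g i)) - (n + 1 : ℝ) * θ ≠ a * (m : ℝ)

/-- `P` is a stochastic matrix and `ν` is a positive invariant probability for it. -/
structure IsStochastic [Fintype X] (P : X → X → ℝ) (ν : X → ℝ) : Prop where
  nonneg : ∀ x x', 0 ≤ P x x'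
  rowSum : ∀ x, ∑ x', P x x' = 1
  nuPos : ∀ x, 0 < ν x
  nuSum : ∑ x, ν x = 1
  nuInv : ∀ x', ∑ x, ν x * P x x' = ν x'

/-- Dual kernel `P*(x, x') = ν(x') P(x', x) / ν(x)`. -/
noncomputable def dualK (P : X → X → ℝ) (ν : X → ℝ) (x x' : X) : ℝ :=
  ν x' * P x' x / ν x

/-- Sup norm of a function on a finite set. -/
noncomputable def supN [Fintype X] [Nonempty X] (ψ : X → ℝ) : ℝ := ⨆ x, |ψ x|

/-- Rayleigh density `φ₊(t) = t e^{-t²/2} 𝟙_{t ≥ 0}`. -/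
noncomputable def rayleigh (t : ℝ) : ℝ := if 0 ≤ t then t * Real.exp (-t ^ 2 / 2) else 0

/-- Centred normal density with standard deviation `s`. -/
noncomputable def gauss (s u : ℝ) : ℝ :=
  Real.exp (-u ^ 2 / (2 * s ^ 2)) / (s * Real.sqrt (2 * π))

/-- Perturbed transition operator `P_t`, as a complex matrix. -/
noncomputable def Pmat [Fintype X] (P : X → X → ℝ) (f : X → ℝ) (t : ℝ) : Matrix X X ℂ :=
  Matrix.of fun x x' => (P x x' : ℂ) * Complex.exp (Complex.I * (t : ℂ) * (f x' : ℂ))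

/-- A complex matrix viewed as a continuous linear operator on `X → ℂ`
(equipped with the sup norm). -/
noncomputable def toCLM [Fintype X] (M : Matrix X X ℂ) : (X → ℂ) →L[ℂ] (X → ℂ) :=
  LinearMap.toContinuousLinearMap M.mulVecLin

/-- Fourier transform `ĥ(t) = ∫ e^{-i t u} h(u) du`. -/
noncomputable def FT (h : ℝ → ℝ) (t : ℝ) : ℂ :=
  ∫ u : ℝ, Complex.exp (-(Complex.I * (t : ℂ) * (u : ℂ))) * (h u : ℂ)

/-- Convolution `(g ∗ k)(u) = ∫ g(v) k(u - v) dv`. -/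
noncomputable def convR (g k : ℝ → ℝ) (u : ℝ) : ℝ := ∫ v : ℝ, g v * k (u - v)

/-- Stone's kernel `κ`. -/
noncomputable def kapp (u : ℝ) : ℝ :=
  if u = 0 then 1 / (2 * π) else (Real.sin (u / 2) / (u / 2)) ^ 2 / (2 * π)

/-- Scaled kernel `κ_δ(u) = κ(u/δ)/δ`. -/
noncomputable def kappD (δ u : ℝ) : ℝ := kapp (u / δ) / δ

/-- Upper regularisation `h̄_ε(u) = sup_{v ∈ [u-ε, u+ε]} h(v)`. -/
noncomputable def upReg (h : ℝ → ℝ) (ε u : ℝ) : ℝ := sSup (h '' Set.Icc (u - ε) (u + ε))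

/-- Lower regularisation `ẖ_ε(u) = inf_{v ∈ [u-ε, u+ε]} h(v)`. -/
noncomputable def loReg (h : ℝ → ℝ) (ε u : ℝ) : ℝ := sInf (h '' Set.Icc (u - ε) (u + ε))

/-- The class `𝓗_ε`: non-negative, locally bounded, with `h`, `h̄_ε`, `ẖ_ε`
measurable and Lebesgue integrable. -/
def MemH (ε : ℝ) (h : ℝ → ℝ) : Prop :=
  (∀ u, 0 ≤ h u) ∧ (∀ K : Set ℝ, IsCompact K → BddAbove (h '' K)) ∧
  Measurable h ∧ Measurable (upReg h ε) ∧ Measurable (loReg h ε) ∧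
  Integrable h ∧ Integrable (upReg h ε) ∧ Integrable (loReg h ε)


section Aux

lemma ind_nonneg (p : Prop) : 0 ≤ ind p := by unfold ind; split <;> norm_num
lemma ind_le_one (p : Prop) : ind p ≤ 1 := by unfold ind; split <;> norm_num
lemma ind_of {p : Prop} (h : p) : ind p = 1 := by simp [ind, h]
lemma ind_of_not {p : Prop} (h : ¬ p) : ind p = 0 := by simp [ind, h]

section QK
variable [Fintype X]

/-- killed transition operator with survival set `S`. -/
noncomputable def Qk (P : X → X → ℝ) (f : X → ℝ) (S : ℝ → Prop) (φ : X → ℝ → ℝ) :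
    X → ℝ → ℝ :=
  fun x y => ∑ x', P x x' * (ind (S (y + f x')) * φ x' (y + f x'))

variable {P : X → X → ℝ} {f : X → ℝ} {S S' : ℝ → Prop}

lemma Qk_mono (hP : ∀ x x', 0 ≤ P x x') {φ ψ : X → ℝ → ℝ}
    (h : ∀ x y, S y → φ x y ≤ ψ x y) :
    ∀ x y, Qk P f S φ x y ≤ Qk P f S ψ x y := by
  intro x y
  apply Finset.sum_le_sum
  intro x' _
  apply mul_le_mul_of_nonneg_left _ (hP x x')
  by_cases hs : S (y + f x')
  · simp only [ind_of hs, one_mul]; exact h _ _ hs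
  · simp [ind_of_not hs]

lemma Qk_nonneg (hP : ∀ x x', 0 ≤ P x x') {φ : X → ℝ → ℝ}
    (h : ∀ x y, S y → 0 ≤ φ x y) :
    ∀ x y, 0 ≤ Qk P f S φ x y := by
  intro x y
  apply Finset.sum_nonneg
  intro x' _
  apply mul_nonneg (hP x x')
  by_cases hs : S (y + f x')
  · simp only [ind_of hs, one_mul]; exact h _ _ hs
  · simp [ind_of_not hs]

lemma Qk_add (φ ψ : X → ℝ → ℝ) (x : X) (y : ℝ) :
    Qk P f S (fun x y => φ x y + ψ x y) x y = Qk P f S φ x y + Qk P f S ψ x y := by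
  unfold Qk; rw [← Finset.sum_add_distrib]; congr 1; ext x'; ring

lemma Qk_sub (φ ψ : X → ℝ → ℝ) (x : X) (y : ℝ) :
    Qk P f S (fun x y => φ x y - ψ x y) x y = Qk P f S φ x y - Qk P f S ψ x y := by
  unfold Qk; rw [← Finset.sum_sub_distrib]; congr 1; ext x'; ring

lemma Qk_smul (c : ℝ) (φ : X → ℝ → ℝ) (x : X) (y : ℝ) :
    Qk P f S (fun x y => c * φ x y) x y = c * Qk P f S φ x y := by
  unfold Qk; rw [Finset.mul_sum]; congr 1; ext x'; ring

lemma Qk_smul_sub (c : ℝ) (φ ψ : X → ℝ → ℝ) (x : X) (y : ℝ) :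
    Qk P f S (fun x y => c * (φ x y - ψ x y)) x y
      = c * (Qk P f S φ x y - Qk P f S ψ x y) := by
  unfold Qk
  rw [← Finset.sum_sub_distrib, Finset.mul_sum]
  congr 1; ext x'; ring

lemma Qk_congr {φ ψ : X → ℝ → ℝ} (h : ∀ x y, S y → φ x y = ψ x y) :
    ∀ x y, Qk P f S φ x y = Qk P f S ψ x y := by
  intro x y
  unfold Qk
  congr 1; ext x'
  by_cases hs : S (y + f x')
  · rw [h _ _ hs]
  · simp [ind_of_not hs]

lemma Qk_le_const (hP : ∀ x x', 0 ≤ P x x') (hrow : ∀ x, ∑ x', P x x' = 1)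
    {φ : X → ℝ → ℝ} {c : ℝ} (hc : 0 ≤ c)
    (h : ∀ x y, S y → φ x y ≤ c) : ∀ x y, Qk P f S φ x y ≤ c := by
  intro x y
  calc Qk P f S φ x y ≤ ∑ x', P x x' * c := by
        apply Finset.sum_le_sum
        intro x' _
        apply mul_le_mul_of_nonneg_left _ (hP x x')
        by_cases hs : S (y + f x')
        · simp only [ind_of hs, one_mul]; exact h _ _ hs
        · simp [ind_of_not hs, hc]
    _ = c := by rw [← Finset.sum_mul, hrow, one_mul]

lemma Qk_tendsto {φ : ℕ → X → ℝ → ℝ} {ψ : X → ℝ → ℝ}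
    (h : ∀ x y, S y → Tendsto (fun n => φ n x y) atTop (𝓝 (ψ x y))) (x : X) (y : ℝ) :
    Tendsto (fun n => Qk P f S (φ n) x y) atTop (𝓝 (Qk P f S ψ x y)) := by
  unfold Qk
  apply tendsto_finset_sum
  intro x' _
  by_cases hs : S (y + f x')
  · exact (tendsto_const_nhds.mul (tendsto_const_nhds.mul (h x' (y + f x') hs)))
  · have he : ∀ ξ : X → ℝ → ℝ, P x x' * (ind (S (y + f x')) * ξ x' (y + f x')) = 0 := by
      intro ξ; rw [ind_of_not hs]; ring
    simp only [he]
    exact tendsto_const_nhds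

/-- comparison between different survival sets, for functions nonnegative on the larger set -/
lemma Qk_le_qk (hP : ∀ x x', 0 ≤ P x x') {φ : X → ℝ → ℝ} (hSS : ∀ t, S t → S' t)
    (hφ : ∀ x y, S' y → 0 ≤ φ x y) :
    ∀ x y, Qk P f S φ x y ≤ Qk P f S' φ x y := by
  intro x y
  apply Finset.sum_le_sum
  intro x' _
  apply mul_le_mul_of_nonneg_left _ (hP x x')
  by_cases hs : S (y + f x')
  · simp only [ind_of hs, ind_of (hSS _ hs)]; exact le_rfl
  · rw [ind_of_not hs, zero_mul]
    by_cases hs' : S' (y + f x')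
    · simp only [ind_of hs', one_mul]; exact hφ _ _ hs'
    · simp [ind_of_not hs']

/-- difference between nested survival sets -/
lemma Qk_sub_qk (hSS : ∀ t, S t → S' t) (φ : X → ℝ → ℝ) (x : X) (y : ℝ) :
    Qk P f S' φ x y - Qk P f S φ x y
      = Qk P f (fun t => S' t ∧ ¬ S t) φ x y := by
  unfold Qk
  rw [← Finset.sum_sub_distrib]
  congr 1; ext x'
  by_cases hs : S (y + f x')
  · rw [ind_of hs, ind_of (hSS _ hs), ind_of_not (fun h => h.2 hs : ¬(S' _ ∧ ¬ S _))]
    ring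
  · by_cases hs' : S' (y + f x')
    · rw [ind_of_not hs, ind_of hs', ind_of (⟨hs', hs⟩ : S' _ ∧ ¬ S _)]
      ring
    · rw [ind_of_not hs, ind_of_not hs', ind_of_not (fun h => hs' h.1 : ¬(S' _ ∧ ¬ S _))]
      ring

/-- iterates: monotonicity -/
lemma Qk_iter_mono (hP : ∀ x x', 0 ≤ P x x') {φ ψ : X → ℝ → ℝ}
    (h : ∀ x y, φ x y ≤ ψ x y) :
    ∀ n x y, (Qk P f S)^[n] φ x y ≤ (Qk P f S)^[n] ψ x y := by
  intro n
  induction n with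
  | zero => simpa using h
  | succ n ih =>
    intro x y
    rw [Function.iterate_succ_apply', Function.iterate_succ_apply']
    exact Qk_mono hP (fun x y _ => ih x y) x y

lemma Qk_iter_nonneg (hP : ∀ x x', 0 ≤ P x x') {φ : X → ℝ → ℝ}
    (h : ∀ x y, 0 ≤ φ x y) :
    ∀ n x y, 0 ≤ (Qk P f S)^[n] φ x y := by
  intro n
  induction n with
  | zero => simpa using h
  | succ n ih =>
    intro x y
    rw [Function.iterate_succ_apply']
    exact Qk_nonneg hP (fun x y _ => ih x y) x y

lemma Qk_iter_le_const (hP : ∀ x x', 0 ≤ P x x') (hrow : ∀ x, ∑ x', P x x' = 1)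
    {φ : X → ℝ → ℝ} {c : ℝ} (hc : 0 ≤ c) (h : ∀ x y, φ x y ≤ c) :
    ∀ n x y, (Qk P f S)^[n] φ x y ≤ c := by
  intro n
  induction n with
  | zero => simpa using h
  | succ n ih =>
    intro x y
    rw [Function.iterate_succ_apply']
    exact Qk_le_const hP hrow hc (fun x y _ => ih x y) x y

lemma Qk_iter_sub (φ ψ : X → ℝ → ℝ) :
    ∀ n x y, (Qk P f S)^[n] (fun x y => φ x y - ψ x y) x y
      = (Qk P f S)^[n] φ x y - (Qk P f S)^[n] ψ x y := by
  intro n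
  induction n with
  | zero => simp
  | succ n ih =>
    intro x y
    rw [Function.iterate_succ_apply', Function.iterate_succ_apply',
      Function.iterate_succ_apply']
    rw [← Qk_sub]
    exact Qk_congr (fun x y _ => ih x y) x y

lemma Qk_iter_smul (c : ℝ) (φ : X → ℝ → ℝ) :
    ∀ n x y, (Qk P f S)^[n] (fun x y => c * φ x y) x y = c * (Qk P f S)^[n] φ x y := by
  intro n
  induction n with
  | zero => simp
  | succ n ih =>
    intro x y
    rw [Function.iterate_succ_apply', Function.iterate_succ_apply', ← Qk_smul]
    exact Qk_congr (fun x y _ => ih x y) x y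

lemma Qk_iter_smul_sub (c : ℝ) (φ ψ : X → ℝ → ℝ) :
    ∀ n x y, (Qk P f S)^[n] (fun x y => c * (φ x y - ψ x y)) x y
      = c * ((Qk P f S)^[n] φ x y - (Qk P f S)^[n] ψ x y) := by
  intro n
  induction n with
  | zero => simp
  | succ n ih =>
    intro x y
    rw [Function.iterate_succ_apply', Function.iterate_succ_apply',
      Function.iterate_succ_apply', ← Qk_smul_sub]
    exact Qk_congr (fun x y _ => ih x y) x y

lemma Qk_iter_tendsto {φ : ℕ → X → ℝ → ℝ} {ψ : X → ℝ → ℝ}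
    (h : ∀ x y, Tendsto (fun m => φ m x y) atTop (𝓝 (ψ x y))) :
    ∀ n x y, Tendsto (fun m => (Qk P f S)^[n] (φ m) x y) atTop
      (𝓝 ((Qk P f S)^[n] ψ x y)) := by
  intro n
  induction n with
  | zero => simpa using h
  | succ n ih =>
    intro x y
    simp only [Function.iterate_succ_apply']
    exact Qk_tendsto (fun x y _ => ih x y) x y

end QK

section Poisson
variable [Fintype X] [DecidableEq X] [Nonempty X]
variable {P : X → X → ℝ} {ν f : X → ℝ}

lemma kpow_nonneg (hP : ∀ x x', 0 ≤ P x x') : ∀ n x x', 0 ≤ kpow P n x x' := by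
  intro n
  induction n with
  | zero => intro x x'; unfold kpow; split <;> norm_num
  | succ n ih =>
    intro x x'
    exact Finset.sum_nonneg fun y _ => mul_nonneg (hP x y) (ih y x')

lemma kpow_rowsum (hrow : ∀ x, ∑ x', P x x' = 1) : ∀ n x, ∑ x', kpow P n x x' = 1 := by
  intro n
  induction n with
  | zero => intro x; simp [kpow]
  | succ n ih =>
    intro x
    show ∑ x', ∑ y, P x y * kpow P n y x' = 1
    rw [Finset.sum_comm]
    calc ∑ y, ∑ x', P x y * kpow P n y x' = ∑ y, P x y * ∑ x', kpow P n y x' := by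
          simp [Finset.mul_sum]
      _ = 1 := by simp only [ih]; simpa using hrow x

lemma fixed_eq_kpow {g : X → ℝ} (hfix : ∀ x, Pop P g x = g x) :
    ∀ n x, g x = ∑ x', kpow P n x x' * g x' := by
  intro n
  induction n with
  | zero => intro x; simp [kpow]
  | succ n ih =>
    intro x
    calc g x = Pop P g x := (hfix x).symm
      _ = ∑ y, P x y * g y := rfl
      _ = ∑ y, P x y * ∑ x', kpow P n y x' * g x' := by
          congr 1; ext y; rw [← ih y]
      _ = ∑ y, ∑ x', P x y * (kpow P n y x' * g x') := by simp [Finset.mul_sum]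
      _ = ∑ x', ∑ y, P x y * (kpow P n y x' * g x') := Finset.sum_comm
      _ = ∑ x', kpow P (n + 1) x x' * g x' := by
          congr 1; ext x'
          show _ = (∑ y, P x y * kpow P n y x') * g x'
          rw [Finset.sum_mul]; congr 1; ext y; ring

/-- Maximum principle: a `Pop`-fixed function is constant under primitivity. -/
lemma fixed_const (hP : ∀ x x', 0 ≤ P x x') (hrow : ∀ x, ∑ x', P x x' = 1) (h1 : Primitive P)
    {g : X → ℝ} (hfix : ∀ x, Pop P g x = g x) : ∃ c, ∀ x, g x = c := by
  obtain ⟨k₀, _, hk⟩ := h1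
  obtain ⟨x₀, -, hx₀⟩ := Finset.exists_max_image Finset.univ g ⟨Classical.arbitrary X, Finset.mem_univ _⟩
  refine ⟨g x₀, fun x => ?_⟩
  have key := fixed_eq_kpow hfix k₀ x₀
  have hsum : ∑ x', kpow P k₀ x₀ x' * (g x₀ - g x') = 0 := by
    have : ∑ x', kpow P k₀ x₀ x' * (g x₀ - g x')
        = (∑ x', kpow P k₀ x₀ x') * g x₀ - ∑ x', kpow P k₀ x₀ x' * g x' := by
      rw [Finset.sum_mul, ← Finset.sum_sub_distrib]
      congr 1; ext x'; ring
    rw [this, kpow_rowsum hrow, one_mul, ← key, sub_self]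
  have hterm : ∀ x' ∈ Finset.univ, 0 ≤ kpow P k₀ x₀ x' * (g x₀ - g x') := by
    intro x' _
    exact mul_nonneg (le_of_lt (hk x₀ x')) (sub_nonneg.2 (hx₀ x' (Finset.mem_univ _)))
  have := (Finset.sum_eq_zero_iff_of_nonneg hterm).1 hsum x (Finset.mem_univ x)
  have hne : kpow P k₀ x₀ x ≠ 0 := ne_of_gt (hk x₀ x)
  have : g x₀ - g x = 0 := by
    rcases mul_eq_zero.1 this with h | h
    · exact absurd h hne
    · exact h
  linarith

end Poisson

section LinAlg
variable [Fintype X] [DecidableEq X] [Nonempty X]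
variable {P : X → X → ℝ} {ν f : X → ℝ}

noncomputable def popL (P : X → X → ℝ) : (X → ℝ) →ₗ[ℝ] (X → ℝ) where
  toFun g := Pop P g
  map_add' g h := by
    ext x
    show ∑ x', P x x' * (g x' + h x') = (∑ x', P x x' * g x') + ∑ x', P x x' * h x'
    rw [← Finset.sum_add_distrib]
    congr 1; ext x'; ring
  map_smul' c g := by
    ext x
    show ∑ x', P x x' * (c * g x') = c * ∑ x', P x x' * g x'
    rw [Finset.mul_sum]
    congr 1; ext x'; ring

noncomputable def nuL (ν : X → ℝ) : (X → ℝ) →ₗ[ℝ] ℝ where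
  toFun g := ∑ x, g x * ν x
  map_add' g h := by
    show ∑ x, (g x + h x) * ν x = _
    rw [← Finset.sum_add_distrib]; congr 1; ext x; ring
  map_smul' c g := by
    show ∑ x, (c * g x) * ν x = c * ∑ x, g x * ν x
    rw [Finset.mul_sum]; congr 1; ext x; ring

lemma exists_poisson (hP : ∀ x x', 0 ≤ P x x') (hrow : ∀ x, ∑ x', P x x' = 1)
    (hnuPos : ∀ x, 0 < ν x) (hnuSum : ∑ x, ν x = 1)
    (hnuInv : ∀ x', ∑ x, ν x * P x x' = ν x')
    (h1 : Primitive P) (h2 : ∑ x, f x * ν x = 0) :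
    ∃ θ : X → ℝ, ∀ x, θ x - Pop P θ x = f x := by
  classical
  set T : (X → ℝ) →ₗ[ℝ] (X → ℝ) := LinearMap.id - popL P with hT
  have hTapp : ∀ g x, T g x = g x - Pop P g x := fun g x => rfl
  -- kernel of T is the constants
  have hone_ne : (fun _ : X => (1:ℝ)) ≠ 0 := by
    intro h
    have := congrFun h (Classical.arbitrary X)
    norm_num at this
  have hker : LinearMap.ker T = Submodule.span ℝ {(fun _ : X => (1:ℝ))} := by
    apply le_antisymm
    · intro g hg
      have hg0 : ∀ x, Pop P g x = g x := by
        intro x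
        have := congrFun (LinearMap.mem_ker.1 hg) x
        have h2 : g x - Pop P g x = 0 := this
        linarith
      obtain ⟨c, hc⟩ := fixed_const hP hrow h1 hg0
      rw [Submodule.mem_span_singleton]
      exact ⟨c, by ext x; simp [hc x]⟩
    · rw [Submodule.span_le, Set.singleton_subset_iff]
      show T (fun _ => 1) = 0
      ext x
      have : Pop P (fun _ => (1:ℝ)) x = 1 := by
        show ∑ x', P x x' * 1 = 1
        simpa using hrow x
      simp [hTapp, this]
  have hkerrank : Module.finrank ℝ (LinearMap.ker T) = 1 := by
    rw [hker]
    exact finrank_span_singleton hone_ne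
  have hpirank : Module.finrank ℝ (X → ℝ) = Fintype.card X := Module.finrank_pi ℝ
  have hrank := LinearMap.finrank_range_add_finrank_ker T
  rw [hkerrank, hpirank] at hrank
  -- kernel of nuL
  have hnuL_ne : nuL ν ≠ 0 := by
    intro h
    have : nuL ν (fun _ => 1) = 0 := by rw [h]; rfl
    have h1' : nuL ν (fun _ => 1) = ∑ x, ν x := by
      show ∑ x, 1 * ν x = ∑ x, ν x
      congr 1; ext x; ring
    rw [h1', hnuSum] at this
    norm_num at this
  have hnurange : Module.finrank ℝ (LinearMap.range (nuL ν)) = 1 := by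
    have hle : Module.finrank ℝ (LinearMap.range (nuL ν)) ≤ 1 := by
      simpa using (LinearMap.range (nuL ν)).finrank_le
    have hne : LinearMap.range (nuL ν) ≠ ⊥ := by
      intro h
      exact hnuL_ne (LinearMap.range_eq_bot.1 h)
    have hpos : 0 < Module.finrank ℝ (LinearMap.range (nuL ν)) := by
      rcases Nat.eq_zero_or_pos (Module.finrank ℝ (LinearMap.range (nuL ν))) with h | h
      · exfalso
        exact hne (Submodule.finrank_eq_zero.1 h)
      · exact h
    omega
  have hnurank := LinearMap.finrank_range_add_finrank_ker (nuL ν)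
  rw [hnurange, hpirank] at hnurank
  -- range T ≤ ker nuL
  have hle : LinearMap.range T ≤ LinearMap.ker (nuL ν) := by
    rintro g ⟨u, rfl⟩
    rw [LinearMap.mem_ker]
    show ∑ x, (u x - Pop P u x) * ν x = 0
    have : ∑ x, (u x - Pop P u x) * ν x
        = ∑ x, u x * ν x - ∑ x, (∑ x', P x x' * u x') * ν x := by
      rw [← Finset.sum_sub_distrib]
      congr 1; ext x
      show (u x - Pop P u x) * ν x = u x * ν x - (Pop P u x) * ν x
      ring
    rw [this]
    have hswap : ∑ x, (∑ x', P x x' * u x') * ν x = ∑ x', u x' * ν x' := by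
      calc ∑ x, (∑ x', P x x' * u x') * ν x = ∑ x, ∑ x', ν x * P x x' * u x' := by
            congr 1; ext x; rw [Finset.sum_mul]; congr 1; ext x'; ring
        _ = ∑ x', ∑ x, ν x * P x x' * u x' := Finset.sum_comm
        _ = ∑ x', (∑ x, ν x * P x x') * u x' := by
            congr 1; ext x'; rw [Finset.sum_mul]
        _ = ∑ x', u x' * ν x' := by
            congr 1; ext x'; rw [hnuInv x']; ring
    rw [hswap]
    ring
  have heq : LinearMap.range T = LinearMap.ker (nuL ν) := by
    apply Submodule.eq_of_le_of_finrank_le hle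
    omega
  have hf : f ∈ LinearMap.ker (nuL ν) := by
    rw [LinearMap.mem_ker]
    exact h2
  rw [← heq] at hf
  obtain ⟨θ, hθ⟩ := hf
  exact ⟨θ, fun x => by rw [← hθ]; rfl⟩

end LinAlg



section Walks
variable {P : X → X → ℝ} {f : X → ℝ}

/-- extract a duplicated-element decomposition from a non-Nodup list -/
lemma exists_dup_decomp {α : Type*} :
    ∀ (M : List α), ¬ M.Nodup → ∃ (a : α) (M₁ M₂ M₃ : List α),
      M = M₁ ++ a :: (M₂ ++ a :: M₃) := by
  intro M
  induction M with
  | nil => intro h; exact absurd List.nodup_nil h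
  | cons b rest ih =>
    intro h
    rw [List.nodup_cons] at h
    push_neg at h
    by_cases hb : b ∈ rest
    · obtain ⟨s, t, rfl⟩ := List.append_of_mem hb
      exact ⟨b, [], s, t, rfl⟩
    · obtain ⟨a, M₁, M₂, M₃, hM⟩ := ih (h hb)
      exact ⟨a, b :: M₁, M₂, M₃, by rw [hM]; rfl⟩

/-- Reduction of a walk to a Nodup walk with no larger `f`-sum,
assuming there is no negative cycle. -/
lemma walk_reduce
    (NNC : ∀ (a : X) (L : List X), List.Chain (fun u v => 0 < P u v) a L →
      L.getLast? = some a → 0 ≤ (L.map f).sum) :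
    ∀ (M : List X), List.Chain' (fun u v => 0 < P u v) M →
      ∃ M' : List X, List.Chain' (fun u v => 0 < P u v) M' ∧ M'.Nodup ∧
        M'.head? = M.head? ∧ M'.getLast? = M.getLast? ∧
        ((M'.map f).sum ≤ (M.map f).sum) := by
  suffices H : ∀ (n : ℕ) (M : List X), M.length ≤ n →
      List.Chain' (fun u v => 0 < P u v) M →
      ∃ M' : List X, List.Chain' (fun u v => 0 < P u v) M' ∧ M'.Nodup ∧
        M'.head? = M.head? ∧ M'.getLast? = M.getLast? ∧
        ((M'.map f).sum ≤ (M.map f).sum) by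
    exact fun M h => H M.length M le_rfl h
  intro n
  induction n with
  | zero =>
    intro M hlen _
    rw [Nat.le_zero, List.length_eq_zero_iff] at hlen
    subst hlen
    exact ⟨[], List.isChain_nil, List.nodup_nil, rfl, rfl, le_rfl⟩
  | succ n ih =>
  intro M hn hchain
  by_cases hnd : M.Nodup
  · exact ⟨M, hchain, hnd, rfl, rfl, le_rfl⟩
  obtain ⟨a, M₁, M₂, M₃, rfl⟩ := exists_dup_decomp M hnd
  -- pieces of the chain
  rw [List.Chain', List.isChain_append] at hchain
  obtain ⟨hc1, hc2, hlink⟩ := hchain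
  have hc2' : List.Chain' (fun u v => 0 < P u v) ((a :: M₂) ++ (a :: M₃)) := hc2
  rw [List.Chain', List.isChain_append] at hc2'
  obtain ⟨hcyc, hc3, hlink2⟩ := hc2'
  -- the removed cycle: from a through M₂ ++ [a]
  have hcycle_chain : List.Chain (fun u v => 0 < P u v) a (M₂ ++ [a]) := by
    have : List.Chain' (fun u v => 0 < P u v) ((a :: M₂) ++ [a]) := by
      rw [List.Chain', List.isChain_append]
      refine ⟨hcyc, List.isChain_singleton a, ?_⟩
      intro u hu v hv
      simp only [List.head?_cons, Option.mem_def, Option.some.injEq] at hv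
      subst hv
      exact hlink2 u hu a rfl
    exact this
  have hcycle_sum : 0 ≤ ((M₂ ++ [a]).map f).sum :=
    NNC a (M₂ ++ [a]) hcycle_chain List.getLast?_concat
  -- the reduced walk
  have hred_chain : List.Chain' (fun u v => 0 < P u v) (M₁ ++ a :: M₃) := by
    rw [List.Chain', List.isChain_append]
    exact ⟨hc1, hc3, fun u hu v hv => hlink u hu v (by simpa using hv)⟩
  have hlen : (M₁ ++ a :: M₃).length ≤ n := by
    simp only [List.length_append, List.length_cons] at hn ⊢
    omega
  obtain ⟨M', h1, h2, h3, h4, h5⟩ := ih (M₁ ++ a :: M₃) hlen hred_chain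
  refine ⟨M', h1, h2, ?_, ?_, ?_⟩
  · rw [h3]
    cases M₁ <;> simp
  · rw [h4]
    have h6 : (a :: (M₂ ++ a :: M₃)).getLast? = (a :: M₃).getLast? := by
      show ((a :: M₂) ++ (a :: M₃)).getLast? = _
      rw [List.getLast?_append]
      exact Option.or_of_isSome (List.getLast?_isSome.2 (List.cons_ne_nil a M₃))
    rw [List.getLast?_append, List.getLast?_append, h6]
  · refine le_trans h5 ?_
    simp only [List.map_append, List.sum_append, List.map_cons, List.sum_cons] at *
    have := hcycle_sum
    simp only [List.map_append, List.sum_append, List.map_cons, List.sum_cons,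
      List.map_nil, List.sum_nil] at this
    linarith

lemma sum_map_le {f : X → ℝ} {B : ℝ} (hB : ∀ x, |f x| ≤ B) :
    ∀ L : List X, ((L.map f).sum ≤ L.length * B) := by
  intro L
  induction L with
  | nil => simp
  | cons a t ih =>
    simp only [List.map_cons, List.sum_cons, List.length_cons]
    have h1 : f a ≤ B := (abs_le.1 (hB a)).2
    push_cast
    nlinarith

lemma sum_map_ge {f : X → ℝ} {B : ℝ} (hB : ∀ x, |f x| ≤ B) :
    ∀ L : List X, (-(L.length * B) ≤ (L.map f).sum) := by
  intro L
  induction L with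
  | nil => simp
  | cons a t ih =>
    simp only [List.map_cons, List.sum_cons, List.length_cons]
    have h1 : -B ≤ f a := (abs_le.1 (hB a)).1
    push_cast
    nlinarith

lemma kpow_pos_walk [Fintype X] [DecidableEq X] (hP : ∀ x x', 0 ≤ P x x') :
    ∀ (n : ℕ) (x x' : X), 0 < kpow P n x x' →
      ∃ L : List X, List.Chain (fun u v => 0 < P u v) x L ∧ L.length = n ∧
        (x :: L).getLast? = some x' := by
  intro n
  induction n with
  | zero =>
    intro x x' h
    have : x = x' := by
      by_contra hne
      simp [kpow, hne] at h
    subst this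
    exact ⟨[], List.Chain.nil, rfl, rfl⟩
  | succ n ih =>
    intro x x' h
    have hterm : ∃ y, 0 < P x y * kpow P n y x' := by
      by_contra hc
      push_neg at hc
      have : (∑ y, P x y * kpow P n y x') ≤ 0 := Finset.sum_nonpos fun y _ => hc y
      have h' : 0 < ∑ y, P x y * kpow P n y x' := h
      linarith
    obtain ⟨y, hy⟩ := hterm
    have hPy : 0 < P x y ∧ 0 < kpow P n y x' := by
      rcases mul_pos_iff.1 hy with h' | h'
      · exact h'
      · exact absurd h'.1 (not_lt.2 (hP x y))
    obtain ⟨L, hc, hlen, hlast⟩ := ih y x' hPy.2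
    refine ⟨y :: L, List.Chain.cons hPy.1 hc, by simp [hlen], ?_⟩
    rw [← hlast]
    rfl

/-- Existence of a strictly negative cycle. -/
lemma exists_neg_cycle [Fintype X] [DecidableEq X] [Nonempty X] {ν : X → ℝ}
    (hP : ∀ x x', 0 ≤ P x x') (hrow : ∀ x, ∑ x', P x x' = 1)
    (hnuPos : ∀ x, 0 < ν x) (hnuInv : ∀ x', ∑ x, ν x * P x x' = ν x')
    (h1 : Primitive P) (h2 : ∑ x, f x * ν x = 0) (h3 : NonLattice P f) :
    ∃ (z : X) (c : List X), List.Chain (fun u v => 0 < P u v) z c ∧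
      c.getLast? = some z ∧ ((c.map f).sum) < 0 := by
  by_contra hcon
  push_neg at hcon
  have NNC : ∀ (a : X) (L : List X), List.Chain (fun u v => 0 < P u v) a L →
      L.getLast? = some a → 0 ≤ (L.map f).sum := by
    intro a L hc hl
    have := hcon a L hc hl
    linarith
  obtain ⟨k₀, hk₀, hk⟩ := h1
  obtain ⟨B, hB⟩ : ∃ B, ∀ x, |f x| ≤ B := by
    obtain ⟨x₀, -, hx₀⟩ := Finset.exists_max_image Finset.univ (fun x => |f x|)
      ⟨Classical.arbitrary X, Finset.mem_univ _⟩
    exact ⟨|f x₀|, fun x => hx₀ x (Finset.mem_univ x)⟩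
  set z : X := Classical.arbitrary X with hz
  set pos : X → X → Prop := fun u v => 0 < P u v with hpos
  set WSet : X → Set ℝ := fun x => {s | ∃ M : List X, List.Chain' pos M ∧ M.Nodup ∧
    M.head? = some z ∧ M.getLast? = some x ∧ s = (M.map f).sum} with hWSet
  have hne : ∀ x, (WSet x).Nonempty := by
    intro x
    obtain ⟨L, hc, hlen, hlast⟩ := kpow_pos_walk hP k₀ z x (hk z x)
    obtain ⟨M', hc', hnd', hh', hl', _⟩ := walk_reduce NNC (z :: L) hc
    exact ⟨(M'.map f).sum, M', hc', hnd', by rw [hh']; rfl, by rw [hl', hlast], rfl⟩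
  have hbdd : ∀ x, ∀ s ∈ WSet x, -((Fintype.card X : ℝ) * B) ≤ s := by
    rintro x s ⟨M, hc, hnd, hh, hl, rfl⟩
    have hlen : M.length ≤ Fintype.card X := hnd.length_le_card
    have := sum_map_ge hB M
    have hBnn : 0 ≤ B := le_trans (abs_nonneg _) (hB z)
    have : -((M.length : ℝ) * B) ≤ (M.map f).sum := this
    have hmono : (M.length : ℝ) * B ≤ (Fintype.card X : ℝ) * B := by
      apply mul_le_mul_of_nonneg_right _ hBnn
      exact_mod_cast hlen
    linarith
  set u : X → ℝ := fun x => sInf (WSet x) with hu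
  have hedge : ∀ x x', pos x x' → u x' ≤ u x + f x' := by
    intro x x' hpxx
    have hstep : ∀ s ∈ WSet x, u x' ≤ s + f x' := by
      rintro s ⟨M, hc, hnd, hh, hl, rfl⟩
      have hcM' : List.Chain' pos (M ++ [x']) := by
        rw [List.Chain', List.isChain_append]
        refine ⟨hc, List.isChain_singleton x', ?_⟩
        intro a ha b hb
        simp only [List.head?_cons, Option.mem_def, Option.some.injEq] at hb
        subst hb
        rw [hl] at ha
        simp only [Option.mem_def, Option.some.injEq] at ha
        subst ha
        exact hpxx
      obtain ⟨M'', hc'', hnd'', hh'', hl'', hs''⟩ := walk_reduce NNC (M ++ [x']) hcM'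
      have hMne : M ≠ [] := by
        intro h
        rw [h] at hh
        simp at hh
      have hmem : (M''.map f).sum ∈ WSet x' := by
        refine ⟨M'', hc'', hnd'', ?_, ?_, rfl⟩
        · rw [hh'', List.head?_append, hh]; rfl
        · rw [hl'', List.getLast?_concat]
      have hinf : u x' ≤ (M''.map f).sum := csInf_le ⟨_, hbdd x'⟩ hmem
      have : (M''.map f).sum ≤ (M.map f).sum + f x' := by
        simpa using hs''
      linarith
    have : u x' - f x' ≤ u x := by
      apply le_csInf (hne x)
      intro s hs
      linarith [hstep s hs]
    linarith
  -- the nu-weighted sum of edge defects vanishes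
  have hCirc : ∑ x, ∑ x', ν x * P x x' * (f x' + u x - u x') = 0 := by
    have e1 : ∑ x, ∑ x', ν x * P x x' * f x' = 0 := by
      rw [Finset.sum_comm]
      calc ∑ x', ∑ x, ν x * P x x' * f x' = ∑ x', (∑ x, ν x * P x x') * f x' := by
            congr 1; ext x'; rw [Finset.sum_mul]
        _ = ∑ x', ν x' * f x' := by congr 1; ext x'; rw [hnuInv]
        _ = 0 := by rw [← h2]; congr 1; ext x'; ring
    have e2 : ∑ x, ∑ x', ν x * P x x' * u x = ∑ x, ν x * u x := by
      congr 1; ext x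
      calc ∑ x', ν x * P x x' * u x = (∑ x', P x x') * (ν x * u x) := by
            rw [Finset.sum_mul]; congr 1; ext x'; ring
        _ = ν x * u x := by rw [hrow, one_mul]
    have e3 : ∑ x, ∑ x', ν x * P x x' * u x' = ∑ x', ν x' * u x' := by
      rw [Finset.sum_comm]
      congr 1; ext x'
      calc ∑ x, ν x * P x x' * u x' = (∑ x, ν x * P x x') * u x' := by
            rw [Finset.sum_mul]
        _ = ν x' * u x' := by rw [hnuInv]
    calc ∑ x, ∑ x', ν x * P x x' * (f x' + u x - u x')
        = ∑ x, (∑ x', ν x * P x x' * f x' + ∑ x', ν x * P x x' * u x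
            - ∑ x', ν x * P x x' * u x') := by
          congr 1; ext x
          rw [← Finset.sum_add_distrib, ← Finset.sum_sub_distrib]
          congr 1; ext x'; ring
      _ = ∑ x, ∑ x', ν x * P x x' * f x' + ∑ x, ∑ x', ν x * P x x' * u x
            - ∑ x, ∑ x', ν x * P x x' * u x' := by
          rw [← Finset.sum_add_distrib, ← Finset.sum_sub_distrib]
      _ = 0 := by rw [e1, e2, e3]; simp
  have hterm_nonneg : ∀ x ∈ Finset.univ, (0:ℝ) ≤ ∑ x', ν x * P x x' * (f x' + u x - u x') := by
    intro x _
    apply Finset.sum_nonneg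
    intro x' _
    by_cases hpe : pos x x'
    · have := hedge x x' hpe
      have h1 : 0 ≤ f x' + u x - u x' := by linarith
      exact mul_nonneg (mul_nonneg (le_of_lt (hnuPos x)) (hP x x')) h1
    · have : P x x' = 0 := le_antisymm (not_lt.1 hpe) (hP x x')
      rw [this]
      ring_nf
      simp
  have hInner : ∀ x, ∑ x', ν x * P x x' * (f x' + u x - u x') = 0 :=
    fun x => (Finset.sum_eq_zero_iff_of_nonneg hterm_nonneg).1 hCirc x (Finset.mem_univ x)
  have hedge_eq : ∀ x x', pos x x' → f x' = u x' - u x := by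
    intro x x' hpe
    have hterm' : ∀ x'' ∈ Finset.univ, (0:ℝ) ≤ ν x * P x x'' * (f x'' + u x - u x'') := by
      intro x'' _
      by_cases hpe' : pos x x''
      · have := hedge x x'' hpe'
        have h1 : 0 ≤ f x'' + u x - u x'' := by linarith
        exact mul_nonneg (mul_nonneg (le_of_lt (hnuPos x)) (hP x x'')) h1
      · have : P x x'' = 0 := le_antisymm (not_lt.1 hpe') (hP x x'')
        rw [this]; ring_nf; simp
    have := (Finset.sum_eq_zero_iff_of_nonneg hterm').1 (hInner x) x' (Finset.mem_univ x')
    have hν : ν x * P x x' ≠ 0 := ne_of_gt (mul_pos (hnuPos x) hpe)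
    have : f x' + u x - u x' = 0 := by
      rcases mul_eq_zero.1 this with h | h
      · exact absurd h hν
      · exact h
    linarith
  -- contradiction with the non-lattice condition
  obtain ⟨n, g, hgpos, hgne⟩ := h3 0 0
  have hedges : ∀ i : Fin (n + 1), pos (g i) (g (i + 1)) := by
    intro i
    have hnn : ∀ j : Fin (n+1), 0 ≤ P (g j) (g (j + 1)) := fun j => hP _ _
    by_contra hneg
    have : P (g i) (g (i + 1)) = 0 := le_antisymm (not_lt.1 hneg) (hnn i)
    have hz0 : ∏ j : Fin (n+1), P (g j) (g (j + 1)) = 0 :=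
      Finset.prod_eq_zero (Finset.mem_univ i) this
    rw [hz0] at hgpos
    exact lt_irrefl 0 hgpos
  have hsum_shift : ∑ i : Fin (n+1), f (g (i + 1)) = ∑ i : Fin (n+1), f (g i) := by
    apply Fintype.sum_equiv (Equiv.addRight 1)
    intro i
    rfl
  have hsum_tel : ∑ i : Fin (n+1), (u (g (i + 1)) - u (g i)) = 0 := by
    rw [Finset.sum_sub_distrib]
    have : ∑ i : Fin (n+1), u (g (i + 1)) = ∑ i : Fin (n+1), u (g i) := by
      apply Fintype.sum_equiv (Equiv.addRight 1)
      intro i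
      rfl
    rw [this, sub_self]
  have hzero : ∑ i : Fin (n+1), f (g i) = 0 := by
    rw [← hsum_shift]
    calc ∑ i : Fin (n+1), f (g (i + 1)) = ∑ i : Fin (n+1), (u (g (i+1)) - u (g i)) := by
          congr 1; ext i; exact hedge_eq _ _ (hedges i)
      _ = 0 := hsum_tel
  have := hgne 0
  simp at this
  exact this hzero

/-- `m`-fold repetition of a list. -/
def repList (c : List X) : ℕ → List X
  | 0 => []
  | m + 1 => c ++ repList c m

lemma repList_length (c : List X) : ∀ m, (repList c m).length = m * c.length := by
  intro m
  induction m with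
  | zero => simp [repList]
  | succ m ih => show (c ++ repList c m).length = _; simp [ih]; ring

lemma repList_sum (c : List X) (f : X → ℝ) :
    ∀ m, ((repList c m).map f).sum = m * ((c.map f).sum) := by
  intro m
  induction m with
  | zero => simp [repList]
  | succ m ih =>
    show ((c ++ repList c m).map f).sum = _
    rw [List.map_append, List.sum_append, ih]
    push_cast
    ring

lemma repList_chain {P : X → X → ℝ} {z : X} {c : List X}
    (hc : List.Chain (fun u v => 0 < P u v) z c) (hlast : c.getLast? = some z) :
    ∀ m, List.Chain (fun u v => 0 < P u v) z (repList c m) := by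
  have hcne : c ≠ [] := by
    intro h; rw [h] at hlast; simp at hlast
  intro m
  induction m with
  | zero => exact List.Chain.nil
  | succ m ih =>
    show List.Chain _ z (c ++ repList c m)
    have h1 : List.Chain' (fun u v => 0 < P u v) ((z :: c) ++ repList c m) := by
      rw [List.Chain', List.isChain_append]
      refine ⟨hc, (List.isChain_cons.1 ih).2, ?_⟩
      intro a ha b hb
      have hga : (z :: c).getLast? = some z := by
        have : (z :: c).getLast? = c.getLast? := by
          cases c with
          | nil => exact absurd rfl hcne
          | cons hd tl => exact List.getLast?_cons_cons
        rw [this, hlast]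
      rw [hga] at ha
      simp only [Option.mem_def, Option.some.injEq] at ha
      subst ha
      exact (List.isChain_cons.1 ih).1 b hb
    exact h1

lemma wt_pos {P : X → X → ℝ} :
    ∀ (L : List X) (x : X), List.Chain (fun u v => 0 < P u v) x L → 0 < wt P x L := by
  intro L
  induction L with
  | nil => intro x _; exact one_pos
  | cons b t ih =>
    intro x hc
    rw [List.Chain, List.isChain_cons_cons] at hc
    obtain ⟨hxb, hbt⟩ := hc
    exact mul_pos hxb (ih b hbt)

lemma wt_nonneg [Fintype X] {P : X → X → ℝ} (hP : ∀ x x', 0 ≤ P x x') :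
    ∀ (L : List X) (x : X), 0 ≤ wt P x L := by
  intro L
  induction L with
  | nil => intro x; exact zero_le_one
  | cons b t ih => intro x; exact mul_nonneg (hP x b) (ih b)

lemma wt_le_one [Fintype X] {P : X → X → ℝ} (hP : ∀ x x', 0 ≤ P x x')
    (hrow : ∀ x, ∑ x', P x x' = 1) :
    ∀ (L : List X) (x : X), wt P x L ≤ 1 := by
  have hPle : ∀ x x', P x x' ≤ 1 := by
    intro x x'
    rw [← hrow x]
    exact Finset.single_le_sum (fun i _ => hP x i) (Finset.mem_univ x')
  intro L
  induction L with
  | nil => intro x; exact le_rfl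
  | cons b t ih =>
    intro x
    calc P x b * wt P b t ≤ 1 * 1 :=
          mul_le_mul (hPle x b) (ih b) (wt_nonneg hP t b) zero_le_one
      _ = 1 := by ring

/-- Uniform descent walks: from every state there is a positive-probability walk of the
same length `N` whose total `f`-sum is at most `-R`. -/
lemma exists_descent [Fintype X] [DecidableEq X] [Nonempty X] {P : X → X → ℝ} {ν f : X → ℝ}
    (hP : ∀ x x', 0 ≤ P x x') (hrow : ∀ x, ∑ x', P x x' = 1)
    (hnuPos : ∀ x, 0 < ν x) (hnuInv : ∀ x', ∑ x, ν x * P x x' = ν x')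
    (h1 : Primitive P) (h2 : ∑ x, f x * ν x = 0) (h3 : NonLattice P f) :
    ∀ R : ℝ, ∃ N : ℕ, 0 < N ∧ ∃ W : X → List X,
      ∀ x, List.Chain (fun u v => 0 < P u v) x (W x) ∧ (W x).length = N ∧
        ((W x).map f).sum ≤ -R := by
  intro R
  obtain ⟨z, c, hc, hlast, hneg⟩ := exists_neg_cycle hP hrow hnuPos hnuInv h1 h2 h3
  obtain ⟨k₀, hk₀, hk⟩ := h1
  obtain ⟨B, hB⟩ : ∃ B, ∀ x, |f x| ≤ B := by
    obtain ⟨x₀, -, hx₀⟩ := Finset.exists_max_image Finset.univ (fun x => |f x|)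
      ⟨Classical.arbitrary X, Finset.mem_univ _⟩
    exact ⟨|f x₀|, fun x => hx₀ x (Finset.mem_univ x)⟩
  set s₀ : ℝ := -((c.map f).sum) with hs₀
  have hs₀pos : 0 < s₀ := by rw [hs₀]; linarith
  obtain ⟨m, hm⟩ : ∃ m : ℕ, (R + k₀ * B) / s₀ ≤ m := exists_nat_ge _
  have hm' : R + k₀ * B ≤ m * s₀ := by
    rw [div_le_iff₀ hs₀pos] at hm
    linarith
  have hcne : c ≠ [] := by
    intro h; rw [h] at hlast; simp at hlast
  -- choose for each x a walk to z of length k₀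
  have hwalk : ∀ x, ∃ L : List X, List.Chain (fun u v => 0 < P u v) x L ∧
      L.length = k₀ ∧ (x :: L).getLast? = some z := fun x => kpow_pos_walk hP k₀ x z (hk x z)
  choose L hLc hLlen hLlast using hwalk
  refine ⟨k₀ + m * c.length, by omega, fun x => L x ++ repList c m, fun x => ?_⟩
  have hrep := repList_chain hc hlast m
  refine ⟨?_, ?_, ?_⟩
  · -- chain
    have h1' : List.Chain' (fun u v => 0 < P u v) ((x :: L x) ++ repList c m) := by
      rw [List.Chain', List.isChain_append]
      refine ⟨hLc x, (List.isChain_cons.1 hrep).2, ?_⟩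
      intro a ha b hb
      rw [hLlast x] at ha
      simp only [Option.mem_def, Option.some.injEq] at ha
      subst ha
      exact (List.isChain_cons.1 hrep).1 b hb
    exact h1'
  · simp [repList_length c m, hLlen x]
  · rw [List.map_append, List.sum_append, repList_sum]
    have h1' : ((L x).map f).sum ≤ k₀ * B := by
      have := sum_map_le hB (L x)
      rw [hLlen x] at this
      exact this
    have : (m : ℝ) * (c.map f).sum = -(m * s₀) := by rw [hs₀]; ring
    rw [this]
    linarith

end Walks


section Core
variable [Fintype X] [DecidableEq X] [Nonempty X]
variable {P : X → X → ℝ} {ν f : X → ℝ}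

/-- The walk exits the survival set `S` at some prefix. -/
def exitsBy (f : X → ℝ) (S : ℝ → Prop) : ℝ → List X → Prop
  | _, [] => False
  | y, w :: W => (¬ S (y + f w)) ∨ exitsBy f S (y + f w) W

omit [Fintype X] [DecidableEq X] [Nonempty X] in
lemma exitsBy_of_final {S : ℝ → Prop} :
    ∀ (W : List X) (y : ℝ), W ≠ [] → ¬ S (y + (W.map f).sum) → exitsBy f S y W := by
  intro W
  induction W with
  | nil => intro y h _; exact absurd rfl h
  | cons w W' ih =>
    intro y _ hfin
    cases W' with
    | nil =>
      left
      simpa using hfin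
    | cons a t =>
      right
      apply ih _ (List.cons_ne_nil a t)
      have : y + f w + ((a :: t).map f).sum = y + ((w :: a :: t).map f).sum := by
        simp only [List.map_cons, List.sum_cons]
        ring
      rw [this]
      exact hfin

omit [Nonempty X] in
/-- If a specific walk exits `S`, then the killed mass after traversing its length is
bounded away from `1`. -/
lemma qk_exits (hP : ∀ x x', 0 ≤ P x x') (hrow : ∀ x, ∑ x', P x x' = 1)
    {S : ℝ → Prop} {φ : X → ℝ → ℝ} (hφ0 : ∀ x y, 0 ≤ φ x y) (hφ1 : ∀ x y, φ x y ≤ 1) :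
    ∀ (W : List X) (x : X) (y : ℝ), exitsBy f S y W →
      (Qk P f S)^[W.length] φ x y ≤ 1 - wt P x W := by
  intro W
  induction W with
  | nil => intro x y hex; exact absurd hex (by simp [exitsBy])
  | cons w W' ih =>
    intro x y hex
    have hψ0 : ∀ x y, 0 ≤ (Qk P f S)^[W'.length] φ x y := Qk_iter_nonneg hP hφ0 _
    have hψ1 : ∀ x y, (Qk P f S)^[W'.length] φ x y ≤ 1 :=
      Qk_iter_le_const hP hrow zero_le_one hφ1 _
    set ψ := (Qk P f S)^[W'.length] φ with hψ
    have hwt1 : wt P w W' ≤ 1 := wt_le_one hP hrow W' w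
    have hwt0 : 0 ≤ wt P w W' := wt_nonneg hP W' w
    have hlen : (w :: W').length = W'.length + 1 := rfl
    rw [hlen, Function.iterate_succ_apply']
    show Qk P f S ψ x y ≤ 1 - wt P x (w :: W')
    have hsplit : ∑ x' ∈ Finset.univ.erase w, P x x' * (ind (S (y + f x')) * ψ x' (y + f x'))
        + P x w * (ind (S (y + f w)) * ψ w (y + f w)) = Qk P f S ψ x y :=
      Finset.sum_erase_add _ _ (Finset.mem_univ w)
    have hPsplit : ∑ x' ∈ Finset.univ.erase w, P x x' + P x w = 1 := by
      rw [Finset.sum_erase_add _ _ (Finset.mem_univ w)]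
      exact hrow x
    have hrest : ∑ x' ∈ Finset.univ.erase w, P x x' * (ind (S (y + f x')) * ψ x' (y + f x'))
        ≤ ∑ x' ∈ Finset.univ.erase w, P x x' := by
      apply Finset.sum_le_sum
      intro x' _
      have h1 : ind (S (y + f x')) * ψ x' (y + f x') ≤ 1 := by
        calc ind (S (y + f x')) * ψ x' (y + f x') ≤ 1 * 1 :=
              mul_le_mul (ind_le_one _) (hψ1 _ _) (hψ0 _ _) zero_le_one
          _ = 1 := one_mul 1
      nlinarith [hP x x']
    have hterm : P x w * (ind (S (y + f w)) * ψ w (y + f w))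
        ≤ P x w * (1 - wt P w W') := by
      rcases hex with hns | hex'
      · rw [ind_of_not hns]
        have : (0:ℝ) ≤ P x w * (1 - wt P w W') := mul_nonneg (hP x w) (by linarith)
        simpa using this
      · have h1 : ψ w (y + f w) ≤ 1 - wt P w W' := ih w (y + f w) hex'
        have h2 : ind (S (y + f w)) * ψ w (y + f w) ≤ 1 - wt P w W' := by
          calc ind (S (y + f w)) * ψ w (y + f w) ≤ 1 * ψ w (y + f w) :=
                mul_le_mul_of_nonneg_right (ind_le_one _) (hψ0 _ _)
            _ ≤ 1 - wt P w W' := by rw [one_mul]; exact h1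
        exact mul_le_mul_of_nonneg_left h2 (hP x w)
    have hwt : wt P x (w :: W') = P x w * wt P w W' := rfl
    nlinarith [hP x w]

/-- Geometric decay of the probability of staying inside the strip `(0, R)`. -/
lemma strip_decay (hP : ∀ x x', 0 ≤ P x x') (hrow : ∀ x, ∑ x', P x x' = 1)
    {R : ℝ} {N : ℕ} (hN : 0 < N) {W : X → List X}
    (hW : ∀ x, List.Chain (fun u v => 0 < P u v) x (W x) ∧ (W x).length = N ∧
      ((W x).map f).sum ≤ -R) :
    ∃ β : ℝ, 0 < β ∧ β ≤ 1 ∧ ∀ (j : ℕ) (x : X) (y : ℝ), 0 < y → y < R →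
      (Qk P f (fun t => 0 < t ∧ t < R))^[j * N] (fun _ _ => (1:ℝ)) x y ≤ (1 - β)^j := by
  obtain ⟨x₁, -, hx₁⟩ := Finset.exists_min_image Finset.univ (fun x => wt P x (W x))
    ⟨Classical.arbitrary X, Finset.mem_univ _⟩
  set β := wt P x₁ (W x₁) with hβ
  have hβpos : 0 < β := wt_pos (W x₁) x₁ (hW x₁).1
  have hβ1 : β ≤ 1 := wt_le_one hP hrow _ _
  refine ⟨β, hβpos, hβ1, ?_⟩
  have hstepN : ∀ (φ : X → ℝ → ℝ), (∀ x y, 0 ≤ φ x y) → (∀ x y, φ x y ≤ 1) →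
      ∀ x y, 0 < y → y < R →
      (Qk P f (fun t => 0 < t ∧ t < R))^[N] φ x y ≤ 1 - β := by
    intro φ h0 h1 x y hy hyR
    have hWne : W x ≠ [] := by
      intro h
      have := (hW x).2.1
      rw [h] at this
      simp at this
      omega
    have hex : exitsBy f (fun t => 0 < t ∧ t < R) y (W x) := by
      apply exitsBy_of_final _ _ hWne
      intro hmem
      have := hmem.1
      have hsum := (hW x).2.2
      linarith
    have := qk_exits hP hrow h0 h1 (W x) x y hex
    rw [(hW x).2.1] at this
    have hβle : β ≤ wt P x (W x) := hx₁ x (Finset.mem_univ x)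
    linarith
  intro j
  induction j with
  | zero => intro x y hy hyR; simp
  | succ j ih =>
    intro x y hy hyR
    have hcnt : (j + 1) * N = N + j * N := by ring
    rw [hcnt, Function.iterate_add_apply]
    set ψ := (Qk P f (fun t => 0 < t ∧ t < R))^[j * N] (fun _ _ => (1:ℝ)) with hψdef
    have hψ0 : ∀ x y, 0 ≤ ψ x y := Qk_iter_nonneg hP (fun _ _ => zero_le_one) _
    have hψ1 : ∀ x y, ψ x y ≤ 1 := Qk_iter_le_const hP hrow zero_le_one (fun _ _ => le_rfl) _
    obtain ⟨N', rfl⟩ : ∃ N', N = N' + 1 := ⟨N - 1, by omega⟩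
    rw [Function.iterate_succ_apply]
    have hpow0 : (0:ℝ) ≤ (1 - β)^j := pow_nonneg (by linarith) j
    -- one application
    have hone : ∀ x y, Qk P f (fun t => 0 < t ∧ t < R) ψ x y
        ≤ (1 - β)^j * Qk P f (fun t => 0 < t ∧ t < R) (fun _ _ => (1:ℝ)) x y := by
      intro x y
      rw [← Qk_smul]
      apply Qk_mono hP
      intro x' y' hy'
      calc ψ x' y' ≤ (1 - β)^j := ih x' y' hy'.1 hy'.2
        _ = (1 - β)^j * 1 := (mul_one _).symm
    calc (Qk P f (fun t => 0 < t ∧ t < R))^[N']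
          (Qk P f (fun t => 0 < t ∧ t < R) ψ) x y
        ≤ (Qk P f (fun t => 0 < t ∧ t < R))^[N']
          (fun x y => (1 - β)^j * Qk P f (fun t => 0 < t ∧ t < R) (fun _ _ => (1:ℝ)) x y) x y :=
          Qk_iter_mono hP hone N' x y
      _ = (1 - β)^j * (Qk P f (fun t => 0 < t ∧ t < R))^[N']
          (Qk P f (fun t => 0 < t ∧ t < R) (fun _ _ => (1:ℝ))) x y :=
          Qk_iter_smul _ _ N' x y
      _ = (1 - β)^j * (Qk P f (fun t => 0 < t ∧ t < R))^[N' + 1] (fun _ _ => (1:ℝ)) x y := by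
          rw [Function.iterate_succ_apply]
      _ ≤ (1 - β)^j * (1 - β) := by
          apply mul_le_mul_of_nonneg_left _ hpow0
          exact hstepN _ (fun _ _ => zero_le_one) (fun _ _ => le_rfl) x y hy hyR
      _ = (1 - β)^(j + 1) := by ring


omit [DecidableEq X] in
/-- Optional-stopping style bound: survival probability is bounded by strip-survival
probability plus the chance of ever reaching level `R`. -/
lemma first_passage (hP : ∀ x x', 0 ≤ P x x') (hrow : ∀ x, ∑ x', P x x' = 1)
    {h : X → ℝ} (hh : ∀ x, ∑ x', P x x' * (f x' + h x') = h x)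
    {Bf Bh : ℝ} (hBf : ∀ x, |f x| ≤ Bf) (hBh : ∀ x, |h x| ≤ Bh)
    {R : ℝ} (hR : 0 < R) :
    ∀ (n : ℕ) (x : X) (y : ℝ), 0 < y →
      (Qk P f (fun t => 0 < t))^[n] (fun _ _ => (1:ℝ)) x y
        ≤ (Qk P f (fun t => 0 < t ∧ t < R))^[n] (fun _ _ => (1:ℝ)) x y
          + (y + h x + (Bf + Bh)) / R := by
  have hBf0 : 0 ≤ Bf := le_trans (abs_nonneg _) (hBf (Classical.arbitrary X))
  have hBh0 : 0 ≤ Bh := le_trans (abs_nonneg _) (hBh (Classical.arbitrary X))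
  set w : X → ℝ → ℝ := fun x y => y + h x + (Bf + Bh) with hw
  have hw_nonneg : ∀ x y, 0 ≤ y → 0 ≤ w x y := by
    intro x y hy
    have := (abs_le.1 (hBh x)).1
    show 0 ≤ y + h x + (Bf + Bh)
    linarith
  have hSS : ∀ t : ℝ, (0 < t ∧ t < R) → 0 < t := fun t ht => ht.1
  have hfull : ∀ x y, ∑ x', P x x' * (y + f x' + h x' + (Bf + Bh)) = w x y := by
    intro x y
    have e1 : ∀ x', P x x' * (y + f x' + h x' + (Bf + Bh))
        = P x x' * (y + (Bf + Bh)) + P x x' * (f x' + h x') := by intro x'; ring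
    calc ∑ x', P x x' * (y + f x' + h x' + (Bf + Bh))
        = ∑ x', (P x x' * (y + (Bf + Bh)) + P x x' * (f x' + h x')) := by
          congr 1; ext x'; rw [e1]
      _ = (∑ x', P x x' * (y + (Bf + Bh))) + ∑ x', P x x' * (f x' + h x') :=
          Finset.sum_add_distrib
      _ = (∑ x', P x x') * (y + (Bf + Bh)) + h x := by rw [hh, ← Finset.sum_mul]
      _ = w x y := by rw [hrow]; show 1 * (y + (Bf + Bh)) + h x = y + h x + (Bf + Bh); ring
  have hQsw : ∀ x y, 0 < y → Qk P f (fun t => 0 < t) w x y ≤ w x y := by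
    intro x y hy
    rw [← hfull x y]
    apply Finset.sum_le_sum
    intro x' _
    apply mul_le_mul_of_nonneg_left _ (hP x x')
    by_cases hs : 0 < y + f x'
    · rw [ind_of hs, one_mul]
    · rw [ind_of_not hs, zero_mul]
      have h1 : -Bf ≤ f x' := (abs_le.1 (hBf x')).1
      have h2 : -Bh ≤ h x' := (abs_le.1 (hBh x')).1
      linarith
  set D : X → ℝ → ℝ :=
    fun x y => Qk P f (fun t => 0 < t ∧ ¬ (0 < t ∧ t < R)) (fun _ _ => (1:ℝ)) x y with hD
  have hdiff : ∀ (φ : X → ℝ → ℝ) x y,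
      Qk P f (fun t => 0 < t) φ x y - Qk P f (fun t => 0 < t ∧ t < R) φ x y
        = Qk P f (fun t => 0 < t ∧ ¬ (0 < t ∧ t < R)) φ x y := fun φ x y =>
    Qk_sub_qk hSS φ x y
  have hDw : ∀ x y, R * D x y ≤ Qk P f (fun t => 0 < t ∧ ¬ (0 < t ∧ t < R)) w x y := by
    intro x y
    rw [hD, ← Qk_smul]
    apply Qk_mono hP
    intro x' y' hy'
    have hy'R : R ≤ y' := by
      by_contra hc
      exact hy'.2 ⟨hy'.1, not_le.1 hc⟩
    have h2 : -Bh ≤ h x' := (abs_le.1 (hBh x')).1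
    show R * 1 ≤ y' + h x' + (Bf + Bh)
    linarith
  have hQRwD : ∀ x y, 0 < y →
      Qk P f (fun t => 0 < t ∧ t < R) w x y + R * D x y ≤ w x y := by
    intro x y hy
    have e1 := hdiff w x y
    have e2 := hDw x y
    have e3 := hQsw x y hy
    linarith
  -- the main induction
  have FP : ∀ (n : ℕ) (x : X) (y : ℝ), 0 < y →
      R * (Qk P f (fun t => 0 < t))^[n] (fun _ _ => (1:ℝ)) x y
        ≤ R * (Qk P f (fun t => 0 < t ∧ t < R))^[n] (fun _ _ => (1:ℝ)) x y
          + w x y - (Qk P f (fun t => 0 < t ∧ t < R))^[n] w x y := by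
    intro n
    induction n with
    | zero => intro x y hy; simp
    | succ n ih =>
      intro x y hy
      have hp1 : ∀ x y, (Qk P f (fun t => 0 < t))^[n] (fun _ _ => (1:ℝ)) x y ≤ 1 :=
        Qk_iter_le_const hP hrow zero_le_one (fun _ _ => le_rfl) n
      have h1 : Qk P f (fun t => 0 < t) ((Qk P f (fun t => 0 < t))^[n] (fun _ _ => (1:ℝ))) x y
          ≤ Qk P f (fun t => 0 < t ∧ t < R)
              ((Qk P f (fun t => 0 < t))^[n] (fun _ _ => (1:ℝ))) x y + D x y := by
        have e1 := hdiff ((Qk P f (fun t => 0 < t))^[n] (fun _ _ => (1:ℝ))) x y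
        have e2 : Qk P f (fun t => 0 < t ∧ ¬ (0 < t ∧ t < R))
            ((Qk P f (fun t => 0 < t))^[n] (fun _ _ => (1:ℝ))) x y ≤ D x y := by
          rw [hD]
          exact Qk_mono hP (fun x' y' _ => hp1 x' y') x y
        linarith
      have h2 : Qk P f (fun t => 0 < t ∧ t < R)
            (fun x y => R * (Qk P f (fun t => 0 < t))^[n] (fun _ _ => (1:ℝ)) x y) x y
          ≤ Qk P f (fun t => 0 < t ∧ t < R)
            (fun x y => R * (Qk P f (fun t => 0 < t ∧ t < R))^[n] (fun _ _ => (1:ℝ)) x y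
              + (w x y - (Qk P f (fun t => 0 < t ∧ t < R))^[n] w x y)) x y := by
        apply Qk_mono hP
        intro x' y' hy'
        have := ih x' y' hy'.1
        linarith
      rw [Qk_smul] at h2
      rw [Qk_add] at h2
      rw [Qk_smul] at h2
      rw [Qk_sub] at h2
      rw [Function.iterate_succ_apply', Function.iterate_succ_apply',
        Function.iterate_succ_apply']
      have h3 := hQRwD x y hy
      have h4 : R * Qk P f (fun t => 0 < t)
          ((Qk P f (fun t => 0 < t))^[n] (fun _ _ => (1:ℝ))) x y
          ≤ R * (Qk P f (fun t => 0 < t ∧ t < R)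
              ((Qk P f (fun t => 0 < t))^[n] (fun _ _ => (1:ℝ))) x y + D x y) :=
        mul_le_mul_of_nonneg_left h1 (le_of_lt hR)
      nlinarith [h2, h3, h4]
  have hQRw0 : ∀ (n : ℕ) (x : X) (y : ℝ), 0 < y →
      0 ≤ (Qk P f (fun t => 0 < t ∧ t < R))^[n] w x y := by
    have haux : ∀ (m : ℕ) (x : X) (y : ℝ),
        0 ≤ (Qk P f (fun t => 0 < t ∧ t < R))^[m + 1] w x y := by
      intro m
      induction m with
      | zero =>
        intro x y
        rw [Function.iterate_succ_apply', Function.iterate_zero_apply]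
        exact Qk_nonneg hP (fun x' y' hy' => hw_nonneg x' y' (le_of_lt hy'.1)) x y
      | succ m ih =>
        intro x y
        rw [Function.iterate_succ_apply']
        exact Qk_nonneg hP (fun x' y' _ => ih x' y') x y
    intro n x y hy
    cases n with
    | zero => exact hw_nonneg x y (le_of_lt hy)
    | succ m => exact haux m x y
  intro n x y hy
  have h3 := FP n x y hy
  have h4 := hQRw0 n x y hy
  have h5 : R * ((Qk P f (fun t => 0 < t ∧ t < R))^[n] (fun _ _ => (1:ℝ)) x y
      + w x y / R) = R * (Qk P f (fun t => 0 < t ∧ t < R))^[n] (fun _ _ => (1:ℝ)) x y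
      + w x y := by
    rw [mul_add, mul_div_cancel₀ _ (ne_of_gt hR)]
  have h6 : R * (Qk P f (fun t => 0 < t))^[n] (fun _ _ => (1:ℝ)) x y
      ≤ R * ((Qk P f (fun t => 0 < t ∧ t < R))^[n] (fun _ _ => (1:ℝ)) x y
        + w x y / R) := by
    rw [h5]
    linarith
  exact le_of_mul_le_mul_left h6 hR


/-- The survival probabilities tend to zero. -/
lemma p_decay (hP : ∀ x x', 0 ≤ P x x') (hrow : ∀ x, ∑ x', P x x' = 1)
    (hnuPos : ∀ x, 0 < ν x) (hnuSum : ∑ x, ν x = 1)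
    (hnuInv : ∀ x', ∑ x, ν x * P x x' = ν x')
    (h1 : Primitive P) (h2 : ∑ x, f x * ν x = 0) (h3 : NonLattice P f) :
    ∀ x y, Tendsto (fun n => (Qk P f (fun t => 0 < t))^[n] (fun _ _ => (1:ℝ)) x y)
      atTop (𝓝 0) := by
  obtain ⟨θ, hθ⟩ := exists_poisson hP hrow hnuPos hnuSum hnuInv h1 h2
  set h : X → ℝ := fun x => Pop P θ x with hhdef
  have hh : ∀ x, ∑ x', P x x' * (f x' + h x') = h x := by
    intro x
    have e1 : ∀ x', f x' + h x' = θ x' := by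
      intro x'
      have := hθ x'
      show f x' + Pop P θ x' = θ x'
      linarith
    calc ∑ x', P x x' * (f x' + h x') = ∑ x', P x x' * θ x' := by
          congr 1; ext x'; rw [e1]
      _ = h x := rfl
  obtain ⟨Bf, hBf⟩ : ∃ B, ∀ x, |f x| ≤ B := by
    obtain ⟨x₀, -, hx₀⟩ := Finset.exists_max_image Finset.univ (fun x => |f x|)
      ⟨Classical.arbitrary X, Finset.mem_univ _⟩
    exact ⟨|f x₀|, fun x => hx₀ x (Finset.mem_univ x)⟩
  obtain ⟨Bh, hBh⟩ : ∃ B, ∀ x, |h x| ≤ B := by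
    obtain ⟨x₀, -, hx₀⟩ := Finset.exists_max_image Finset.univ (fun x => |h x|)
      ⟨Classical.arbitrary X, Finset.mem_univ _⟩
    exact ⟨|h x₀|, fun x => hx₀ x (Finset.mem_univ x)⟩
  have hp0 : ∀ (n : ℕ) (x : X) (y : ℝ),
      0 ≤ (Qk P f (fun t => 0 < t))^[n] (fun _ _ => (1:ℝ)) x y :=
    fun n x y => Qk_iter_nonneg hP (fun _ _ => zero_le_one) n x y
  -- antitonicity in n
  have hanti : ∀ (a b : ℕ), a ≤ b → ∀ (x : X) (y : ℝ),
      (Qk P f (fun t => 0 < t))^[b] (fun _ _ => (1:ℝ)) x y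
        ≤ (Qk P f (fun t => 0 < t))^[a] (fun _ _ => (1:ℝ)) x y := by
    have hstep : ∀ (k : ℕ) (x : X) (y : ℝ),
        (Qk P f (fun t => 0 < t))^[k + 1] (fun _ _ => (1:ℝ)) x y
          ≤ (Qk P f (fun t => 0 < t))^[k] (fun _ _ => (1:ℝ)) x y := by
      intro k x y
      rw [Function.iterate_succ_apply]
      apply Qk_iter_mono hP _ k x y
      exact Qk_le_const hP hrow zero_le_one (fun _ _ _ => le_rfl)
    intro a b hab
    induction b, hab using Nat.le_induction with
    | base => intro x y; exact le_rfl
    | succ b hab ih => intro x y; exact le_trans (hstep b x y) (ih x y)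
  -- the main case : positive starting point
  have main : ∀ (x : X) (y : ℝ), 0 < y →
      Tendsto (fun n => (Qk P f (fun t => 0 < t))^[n] (fun _ _ => (1:ℝ)) x y)
        atTop (𝓝 0) := by
    intro x y hy
    rw [Metric.tendsto_atTop]
    intro ε hε
    set w₀ : ℝ := y + h x + (Bf + Bh) with hw₀
    set R : ℝ := max (y + 1) (2 * (|w₀| + 1) / ε) with hR'
    have hR : 0 < R := lt_of_lt_of_le (by linarith) (le_max_left _ _)
    have hyR : y < R := lt_of_lt_of_le (by linarith) (le_max_left _ _)
    have hwR : w₀ / R ≤ ε / 2 := by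
      rw [div_le_iff₀ hR]
      have hRge : 2 * (|w₀| + 1) / ε ≤ R := le_max_right _ _
      have habs : 0 ≤ |w₀| := abs_nonneg _
      have hkey : ε / 2 * (2 * (|w₀| + 1) / ε) = |w₀| + 1 := by
        field_simp
      have h5 : ε / 2 * (2 * (|w₀| + 1) / ε) ≤ ε / 2 * R :=
        mul_le_mul_of_nonneg_left hRge (by linarith)
      rw [hkey] at h5
      have := le_abs_self w₀
      linarith
    obtain ⟨N, hN, W, hW⟩ := exists_descent hP hrow hnuPos hnuInv h1 h2 h3 R
    obtain ⟨β, hβpos, hβ1, hdecay⟩ := strip_decay hP hrow hN hW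
    have htend : Tendsto (fun j : ℕ => (1 - β)^j) atTop (𝓝 0) :=
      tendsto_pow_atTop_nhds_zero_of_lt_one (by linarith) (by linarith)
    obtain ⟨j, hj⟩ : ∃ j : ℕ, (1 - β)^j < ε / 2 := by
      have := (htend.eventually (gt_mem_nhds (by positivity : (0:ℝ) < ε / 2))).exists
      exact this
    refine ⟨j * N, fun n hn => ?_⟩
    have hchain : (Qk P f (fun t => 0 < t))^[n] (fun _ _ => (1:ℝ)) x y
        ≤ (Qk P f (fun t => 0 < t))^[j * N] (fun _ _ => (1:ℝ)) x y := hanti _ _ hn x y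
    have hfp := first_passage hP hrow hh hBf hBh hR (j * N) x y hy
    have hd := hdecay j x y hy hyR
    have hdist : dist ((Qk P f (fun t => 0 < t))^[n] (fun _ _ => (1:ℝ)) x y) 0
        = (Qk P f (fun t => 0 < t))^[n] (fun _ _ => (1:ℝ)) x y := by
      rw [Real.dist_eq, sub_zero, abs_of_nonneg (hp0 n x y)]
    rw [hdist]
    calc (Qk P f (fun t => 0 < t))^[n] (fun _ _ => (1:ℝ)) x y
        ≤ (Qk P f (fun t => 0 < t))^[j * N] (fun _ _ => (1:ℝ)) x y := hchain
      _ ≤ (Qk P f (fun t => 0 < t ∧ t < R))^[j * N] (fun _ _ => (1:ℝ)) x y + w₀ / R := hfp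
      _ ≤ (1 - β)^j + ε / 2 := add_le_add hd hwR
      _ < ε := by linarith
  -- general starting point
  intro x y
  have hshift : Tendsto (fun n => (Qk P f (fun t => 0 < t))^[n + 1]
      (fun _ _ => (1:ℝ)) x y) atTop (𝓝 0) := by
    have he : ∀ n : ℕ, (Qk P f (fun t => 0 < t))^[n + 1] (fun _ _ => (1:ℝ)) x y
        = Qk P f (fun t => 0 < t)
            ((Qk P f (fun t => 0 < t))^[n] (fun _ _ => (1:ℝ))) x y := by
      intro n
      rw [Function.iterate_succ_apply']
    simp only [he]
    have hzero : Qk P f (fun t => 0 < t) (fun _ _ => (0:ℝ)) x y = 0 := by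
      unfold Qk
      apply Finset.sum_eq_zero
      intro x' _
      ring
    have := Qk_tendsto (P := P) (f := f) (S := fun t => 0 < t)
      (φ := fun n => (Qk P f (fun t => 0 < t))^[n] (fun _ _ => (1:ℝ)))
      (ψ := fun _ _ => (0:ℝ)) (fun x' y' hy' => main x' y' hy') x y
    rw [hzero] at this
    exact this
  exact (tendsto_add_atTop_iff_nat 1).1 hshift

end Core


section Bridge
variable [Fintype X]
variable {P : X → X → ℝ} {f : X → ℝ}

lemma ind_and (p q : Prop) : ind (p ∧ q) = ind p * ind q := by
  by_cases hp : p
  · by_cases hq : q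
    · rw [ind_of hp, ind_of hq, ind_of ⟨hp, hq⟩, one_mul]
    · rw [ind_of_not hq, ind_of_not (fun h => hq h.2), mul_zero]
  · rw [ind_of_not hp, ind_of_not (fun h => hp h.1), zero_mul]

lemma ind_congr {p q : Prop} (h : p ↔ q) : ind p = ind q := by
  by_cases hp : p
  · rw [ind_of hp, ind_of (h.1 hp)]
  · rw [ind_of_not hp, ind_of_not (fun hq => hp (h.2 hq))]

lemma pathExt_cons_succ {n : ℕ} (x x₁ : X) (rest : Fin n → X) :
    ∀ k : ℕ, k ≤ n → pathExt x (Fin.cons x₁ rest : Fin (n+1) → X) (k + 1)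
      = pathExt x₁ rest k := by
  intro k hk
  unfold pathExt
  rcases k with _ | j
  · rw [dif_pos ⟨le_refl 1, by omega⟩, dif_neg (by omega)]
    have h0 : (⟨1 - 1, by omega⟩ : Fin (n+1)) = 0 := by
      apply Fin.ext
      simp
    rw [h0, Fin.cons_zero]
  · rw [dif_pos ⟨by omega, by omega⟩, dif_pos ⟨by omega, by omega⟩]
    have he : (⟨j + 1 + 1 - 1, by omega⟩ : Fin (n + 1))
        = Fin.succ ⟨j + 1 - 1, by omega⟩ := by
      apply Fin.ext
      simp
    rw [he, Fin.cons_succ]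

lemma pathExt_zero {n : ℕ} (x : X) (path : Fin n → X) : pathExt x path 0 = x := by
  unfold pathExt
  rw [dif_neg (by omega)]

lemma Spath_cons_succ {n : ℕ} (x x₁ : X) (rest : Fin n → X) (f : X → ℝ) :
    ∀ k : ℕ, k ≤ n → Spath f (pathExt x (Fin.cons x₁ rest : Fin (n+1) → X)) (k + 1)
      = f x₁ + Spath f (pathExt x₁ rest) k := by
  intro k hk
  unfold Spath
  have h1 : (1 : ℕ) ∈ Finset.Icc 1 (k + 1) := by simp
  rw [← Finset.add_sum_erase _ _ h1]
  have he1 : pathExt x (Fin.cons x₁ rest : Fin (n+1) → X) 1 = x₁ := by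
    have := pathExt_cons_succ x x₁ rest 0 (by omega)
    rw [this, pathExt_zero]
  rw [he1]
  congr 1
  have h2 : (Finset.Icc 1 (k+1)).erase 1 = Finset.Icc 2 (k + 1) := by
    rw [Finset.Icc_erase_left]
    exact (Finset.Icc_add_one_left_eq_Ioc 1 (k+1)).symm
  rw [h2]
  have h3 : Finset.Icc 2 (k + 1) = (Finset.Icc 1 k).map (addRightEmbedding 1) := by
    rw [Finset.map_add_right_Icc]
  rw [h3, Finset.sum_map]
  apply Finset.sum_congr rfl
  intro j hj
  rw [Finset.mem_Icc] at hj
  show f (pathExt x (Fin.cons x₁ rest : Fin (n+1) → X) (j + 1)) = _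
  rw [pathExt_cons_succ x x₁ rest j (by omega)]

lemma survives_cons {n : ℕ} (x x₁ : X) (rest : Fin n → X) (f : X → ℝ) (y : ℝ) :
    survives f y (n + 1) (pathExt x (Fin.cons x₁ rest : Fin (n+1) → X))
      ↔ (0 < y + f x₁) ∧ survives f (y + f x₁) n (pathExt x₁ rest) := by
  unfold survives
  constructor
  · intro hs
    constructor
    · have h1 := hs 1 (by simp)
      have h2 : Spath f (pathExt x (Fin.cons x₁ rest : Fin (n+1) → X)) (0 + 1)
          = f x₁ + Spath f (pathExt x₁ rest) 0 := Spath_cons_succ x x₁ rest f 0 (by omega)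
      have h3 : Spath f (pathExt x₁ rest) 0 = 0 := by simp [Spath]
      norm_num at h2
      rw [h2, h3] at h1
      linarith
    · intro k hk
      rw [Finset.mem_Icc] at hk
      have := hs (k + 1) (by rw [Finset.mem_Icc]; omega)
      rw [Spath_cons_succ x x₁ rest f k (by omega)] at this
      linarith
  · rintro ⟨h1, h2⟩ k hk
    rw [Finset.mem_Icc] at hk
    rcases k with _ | j
    · omega
    · rw [Spath_cons_succ x x₁ rest f j (by omega)]
      rcases Nat.eq_zero_or_pos j with rfl | hj
      · simpa [Spath] using h1
      · have := h2 j (by rw [Finset.mem_Icc]; omega)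
        linarith

/-- The bridge between the path-space expectation `Ex` and iterates of the killed
operator `Qk`. -/
lemma Ex_eq_iter (P : X → X → ℝ) (f : X → ℝ) (φ : X → ℝ → ℝ) :
    ∀ (n : ℕ) (x : X) (y : ℝ),
      Ex P x n (fun ω => φ (ω n) (y + Spath f ω n) * ind (survives f y n ω))
        = (Qk P f (fun t => 0 < t))^[n] φ x y := by
  intro n
  induction n with
  | zero =>
    intro x y
    unfold Ex
    haveI : Subsingleton (Fin 0 → X) := ⟨fun a b => funext fun i => i.elim0⟩
    rw [Fintype.sum_subsingleton _ (fun _ : Fin 0 => x)]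
    have h1 : List.ofFn (fun _ : Fin 0 => x) = [] := List.ofFn_zero
    rw [h1]
    show 1 * (φ (pathExt x (fun _ : Fin 0 => x) 0) (y + Spath f _ 0)
      * ind (survives f y 0 (pathExt x (fun _ : Fin 0 => x)))) = φ x y
    rw [pathExt_zero]
    have h2 : Spath f (pathExt x (fun _ : Fin 0 => x)) 0 = 0 := by simp [Spath]
    have h3 : survives f y 0 (pathExt x (fun _ : Fin 0 => x)) := by
      intro k hk
      simp at hk
    rw [h2, ind_of h3, add_zero]
    ring
  | succ n ih =>
    intro x y
    rw [Function.iterate_succ_apply']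
    unfold Ex
    rw [← Fintype.sum_equiv (Fin.consEquiv (fun _ : Fin (n+1) => X))
      (fun p : X × (Fin n → X) =>
        wt P x (List.ofFn (Fin.cons p.1 p.2 : Fin (n+1) → X))
          * (φ (pathExt x (Fin.cons p.1 p.2 : Fin (n+1) → X) (n+1))
              (y + Spath f (pathExt x (Fin.cons p.1 p.2 : Fin (n+1) → X)) (n+1))
            * ind (survives f y (n+1) (pathExt x (Fin.cons p.1 p.2 : Fin (n+1) → X)))))
      _ (fun p => rfl)]
    rw [Fintype.sum_prod_type]
    show ∑ x₁, ∑ rest : Fin n → X, _ = _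
    have hterm : ∀ (x₁ : X) (rest : Fin n → X),
        wt P x (List.ofFn (Fin.cons x₁ rest : Fin (n+1) → X))
          * (φ (pathExt x (Fin.cons x₁ rest : Fin (n+1) → X) (n+1))
              (y + Spath f (pathExt x (Fin.cons x₁ rest : Fin (n+1) → X)) (n+1))
            * ind (survives f y (n+1) (pathExt x (Fin.cons x₁ rest : Fin (n+1) → X))))
        = P x x₁ * (ind (0 < y + f x₁)
            * (wt P x₁ (List.ofFn rest)
              * (φ (pathExt x₁ rest n) ((y + f x₁) + Spath f (pathExt x₁ rest) n)
                * ind (survives f (y + f x₁) n (pathExt x₁ rest))))) := by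
      intro x₁ rest
      have ha : List.ofFn (Fin.cons x₁ rest : Fin (n+1) → X) = x₁ :: List.ofFn rest := by
        rw [List.ofFn_succ]
        congr 1
      have hwt : wt P x (x₁ :: List.ofFn rest) = P x x₁ * wt P x₁ (List.ofFn rest) := rfl
      rw [ha, hwt]
      rw [pathExt_cons_succ x x₁ rest n (le_refl n)]
      rw [Spath_cons_succ x x₁ rest f n (le_refl n)]
      rw [ind_congr (survives_cons x x₁ rest f y), ind_and]
      ring_nf
    rw [Finset.sum_congr rfl (fun x₁ _ => Finset.sum_congr rfl (fun rest _ => hterm x₁ rest))]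
    show ∑ x₁, ∑ rest : Fin n → X, P x x₁ * (ind (0 < y + f x₁) * (wt P x₁ (List.ofFn rest) * _)) = _
    unfold Qk
    apply Finset.sum_congr rfl
    intro x₁ _
    rw [← Finset.mul_sum, ← Finset.mul_sum]
    congr 1
    congr 1
    exact ih x₁ (y + f x₁)

end Bridge

end Aux

/-- Proposition 2.1: existence of the harmonic function `V`. -/
theorem exists_harmonic_function [Fintype X] [DecidableEq X] [Nonempty X]
    (P : X → X → ℝ) (ν f : X → ℝ) (hS : IsStochastic P ν)
    (h1 : Primitive P) (h2 : ∑ x, f x * ν x = 0) (h3 : NonLattice P f) :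
    ∃ V : X → ℝ → ℝ,
      (∀ x y, 0 ≤ V x y) ∧ (∃ x y, V x y ≠ 0) ∧
      (∀ (x : X) (y : ℝ) (n : ℕ), 1 ≤ n →
        Ex P x n (fun ω => V (ω n) (y + Spath f ω n) * ind (survives f y n ω)) = V x y) ∧
      (∀ x : X, Monotone (V x)) ∧
      (∃ c > 0, ∀ x y, V x y ≤ c * (1 + max y 0)) ∧
      (∀ δ ∈ Set.Ioo (0 : ℝ) 1, ∃ cδ > 0, ∀ x y,
        (1 - δ) * max y 0 - cδ ≤ V x y ∧ V x y ≤ (1 + δ) * max y 0 + cδ) := by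
  classical
  obtain ⟨hP, hrow, hnuPos, hnuSum, hnuInv⟩ := hS
  -- Poisson equation and basic bounds
  obtain ⟨θ, hθ⟩ := exists_poisson hP hrow hnuPos hnuSum hnuInv h1 h2
  set h : X → ℝ := fun x => Pop P θ x with hhdef
  have hh : ∀ x, ∑ x', P x x' * (f x' + h x') = h x := by
    intro x
    have e1 : ∀ x', f x' + h x' = θ x' := by
      intro x'
      have := hθ x'
      show f x' + Pop P θ x' = θ x'
      linarith
    calc ∑ x', P x x' * (f x' + h x') = ∑ x', P x x' * θ x' := by
          congr 1; ext x'; rw [e1]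
      _ = h x := rfl
  obtain ⟨Bf, hBf⟩ : ∃ B, ∀ x, |f x| ≤ B := by
    obtain ⟨x₀, -, hx₀⟩ := Finset.exists_max_image Finset.univ (fun x => |f x|)
      ⟨Classical.arbitrary X, Finset.mem_univ _⟩
    exact ⟨|f x₀|, fun x => hx₀ x (Finset.mem_univ x)⟩
  obtain ⟨Bh, hBh⟩ : ∃ B, ∀ x, |h x| ≤ B := by
    obtain ⟨x₀, -, hx₀⟩ := Finset.exists_max_image Finset.univ (fun x => |h x|)
      ⟨Classical.arbitrary X, Finset.mem_univ _⟩
    exact ⟨|h x₀|, fun x => hx₀ x (Finset.mem_univ x)⟩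
  have hBf0 : 0 ≤ Bf := le_trans (abs_nonneg _) (hBf (Classical.arbitrary X))
  have hBh0 : 0 ≤ Bh := le_trans (abs_nonneg _) (hBh (Classical.arbitrary X))
  set C₆ : ℝ := 2 * Bh + Bf with hC₆
  have hC₆0 : 0 ≤ C₆ := by rw [hC₆]; linarith
  set CA : ℝ := 2 * C₆ with hCA
  have hCA0 : 0 ≤ CA := by rw [hCA]; linarith
  set φa : X → ℝ → ℝ := fun x' y' => y' + h x' - Bh with hφa
  set φb : X → ℝ → ℝ := fun _ y' => y' with hφb
  set εa : X → ℝ → ℝ :=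
    fun x' y' => Qk P f (fun t => 0 < t) φa x' y' - φa x' y' with hεa
  -- survival probabilities
  have hp0 : ∀ (n : ℕ) (x : X) (y : ℝ),
      0 ≤ (Qk P f (fun t => 0 < t))^[n] (fun _ _ => (1:ℝ)) x y :=
    fun n x y => Qk_iter_nonneg hP (fun _ _ => zero_le_one) n x y
  have hp1 : ∀ (n : ℕ) (x : X) (y : ℝ),
      (Qk P f (fun t => 0 < t))^[n] (fun _ _ => (1:ℝ)) x y ≤ 1 :=
    fun n x y => Qk_iter_le_const hP hrow zero_le_one (fun _ _ => le_rfl) n x y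
  have hptend := p_decay hP hrow hnuPos hnuSum hnuInv h1 h2 h3
  -- full-sum identity for φa
  have hfullφa : ∀ x y, ∑ x', P x x' * φa x' (y + f x') = φa x y := by
    intro x y
    have e1 : ∀ x', P x x' * φa x' (y + f x')
        = P x x' * (y - Bh) + P x x' * (f x' + h x') := by
      intro x'
      show P x x' * (y + f x' + h x' - Bh) = _
      ring
    calc ∑ x', P x x' * φa x' (y + f x')
        = ∑ x', (P x x' * (y - Bh) + P x x' * (f x' + h x')) := by
          congr 1; ext x'; rw [e1]
      _ = (∑ x', P x x' * (y - Bh)) + ∑ x', P x x' * (f x' + h x') :=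
          Finset.sum_add_distrib
      _ = (∑ x', P x x') * (y - Bh) + h x := by rw [hh, ← Finset.sum_mul]
      _ = φa x y := by rw [hrow]; show 1 * (y - Bh) + h x = y + h x - Bh; ring
  -- the defect identity
  have hdefect : ∀ x y, εa x y
      = ∑ x', P x x' * ((1 - ind (0 < y + f x')) * (- φa x' (y + f x'))) := by
    intro x y
    rw [hεa]
    show Qk P f (fun t => 0 < t) φa x y - φa x y = _
    rw [← hfullφa x y]
    unfold Qk
    rw [← Finset.sum_sub_distrib]
    congr 1; ext x'
    ring
  have hεa0 : ∀ x y, 0 ≤ εa x y := by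
    intro x y
    rw [hdefect]
    apply Finset.sum_nonneg
    intro x' _
    apply mul_nonneg (hP x x')
    by_cases hs : 0 < y + f x'
    · rw [ind_of hs]; ring_nf; exact le_rfl
    · rw [ind_of_not hs]
      have h2 : h x' ≤ Bh := (abs_le.1 (hBh x')).2
      have : -φa x' (y + f x') = -(y + f x') + (Bh - h x') := by
        show -(y + f x' + h x' - Bh) = _
        ring
      rw [this]
      have : 0 ≤ -(y + f x') := by linarith [not_lt.1 hs]
      nlinarith
  have hεa_le : ∀ x y, εa x y ≤ C₆ + max (-y) 0 := by
    intro x y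
    rw [hdefect]
    have hterm : ∀ x' ∈ Finset.univ, P x x' * ((1 - ind (0 < y + f x')) * (- φa x' (y + f x')))
        ≤ P x x' * (C₆ + max (-y) 0) := by
      intro x' _
      apply mul_le_mul_of_nonneg_left _ (hP x x')
      by_cases hs : 0 < y + f x'
      · rw [ind_of hs]
        have : (0:ℝ) ≤ C₆ + max (-y) 0 := by
          have := le_max_right (-y) (0:ℝ)
          linarith
        nlinarith
      · rw [ind_of_not hs]
        have h2 : -Bh ≤ h x' := (abs_le.1 (hBh x')).1
        have h3 : -Bf ≤ f x' := (abs_le.1 (hBf x')).1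
        have h4 : -y ≤ max (-y) 0 := le_max_left _ _
        have hφ : φa x' (y + f x') = y + f x' + h x' - Bh := rfl
        rw [hφ, hC₆]
        ring_nf
        nlinarith
    calc ∑ x', P x x' * ((1 - ind (0 < y + f x')) * (- φa x' (y + f x')))
        ≤ ∑ x', P x x' * (C₆ + max (-y) 0) := Finset.sum_le_sum hterm
      _ = C₆ + max (-y) 0 := by rw [← Finset.sum_mul, hrow, one_mul]
  have hkillmass : ∀ x y, 1 - Qk P f (fun t => 0 < t) (fun _ _ => (1:ℝ)) x y
      = ∑ x', P x x' * (1 - ind (0 < y + f x')) := by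
    intro x y
    have e : ∑ x', P x x' * (1 - ind (0 < y + f x'))
        = (∑ x', P x x')
          - ∑ x', P x x' * (ind (0 < y + f x') * (fun (_ : X) (_ : ℝ) => (1:ℝ)) x' (y + f x')) := by
      rw [← Finset.sum_sub_distrib]
      congr 1; ext x'
      show P x x' * (1 - ind (0 < y + f x')) = P x x' - P x x' * (ind (0 < y + f x') * 1)
      ring
    rw [e, hrow]
    rfl
  have hεa_leS : ∀ x y, 0 < y →
      εa x y ≤ C₆ * (1 - Qk P f (fun t => 0 < t) (fun _ _ => (1:ℝ)) x y) := by
    intro x y hy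
    rw [hdefect, hkillmass, Finset.mul_sum]
    apply Finset.sum_le_sum
    intro x' _
    by_cases hs : 0 < y + f x'
    · rw [ind_of hs]
      ring_nf
      exact le_rfl
    · rw [ind_of_not hs]
      have h2 : -Bh ≤ h x' := (abs_le.1 (hBh x')).1
      have h3 : -Bf ≤ f x' := (abs_le.1 (hBf x')).1
      have h5 : -(y + f x') ≤ Bf := by linarith
      have h6 : - φa x' (y + f x') ≤ C₆ := by
        show -(y + f x' + h x' - Bh) ≤ C₆
        rw [hC₆]
        linarith
      have hp := hP x x'
      have h7 := mul_le_mul_of_nonneg_left h6 hp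
      nlinarith [h7]
  -- monotonicity of a_n in n
  have hQφa_ge : ∀ x y, φa x y ≤ Qk P f (fun t => 0 < t) φa x y := by
    intro x y
    have h0 : (0:ℝ) ≤ Qk P f (fun t => 0 < t) φa x y - φa x y := hεa0 x y
    linarith
  have ha_mono : ∀ (n : ℕ) (x : X) (y : ℝ),
      (Qk P f (fun t => 0 < t))^[n] φa x y ≤ (Qk P f (fun t => 0 < t))^[n+1] φa x y := by
    intro n x y
    rw [Function.iterate_succ_apply]
    exact Qk_iter_mono hP hQφa_ge n x y
  -- one-step bound on iterated defects
  have hstepε : ∀ x y, Qk P f (fun t => 0 < t) εa x y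
      ≤ C₆ * ((Qk P f (fun t => 0 < t))^[1] (fun _ _ => (1:ℝ)) x y
        - (Qk P f (fun t => 0 < t))^[2] (fun _ _ => (1:ℝ)) x y) := by
    intro x y
    have h1' : Qk P f (fun t => 0 < t) εa x y
        ≤ Qk P f (fun t => 0 < t)
          (fun x y => C₆ * ((fun _ _ => (1:ℝ)) x y
            - Qk P f (fun t => 0 < t) (fun _ _ => (1:ℝ)) x y)) x y := by
      apply Qk_mono hP
      intro x' y' hy'
      show εa x' y' ≤ C₆ * ((1:ℝ) - Qk P f (fun t => 0 < t) (fun _ _ => (1:ℝ)) x' y')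
      exact hεa_leS x' y' hy'
    have e2 := Qk_smul_sub (P := P) (f := f) (S := fun t => 0 < t) C₆
      (fun _ _ => (1:ℝ)) (Qk P f (fun t => 0 < t) (fun _ _ => (1:ℝ))) x y
    rw [e2] at h1'
    rw [Function.iterate_one]
    rw [show (2:ℕ) = 1 + 1 from rfl, Function.iterate_succ_apply', Function.iterate_one]
    exact h1'
  have hiterε : ∀ (k : ℕ) (x : X) (y : ℝ),
      (Qk P f (fun t => 0 < t))^[k+1] εa x y
        ≤ C₆ * ((Qk P f (fun t => 0 < t))^[k+1] (fun _ _ => (1:ℝ)) x y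
          - (Qk P f (fun t => 0 < t))^[k+2] (fun _ _ => (1:ℝ)) x y) := by
    intro k x y
    rw [Function.iterate_succ_apply]
    have h1' : (Qk P f (fun t => 0 < t))^[k] (Qk P f (fun t => 0 < t) εa) x y
        ≤ (Qk P f (fun t => 0 < t))^[k]
          (fun x y => C₆ * ((Qk P f (fun t => 0 < t))^[1] (fun _ _ => (1:ℝ)) x y
            - (Qk P f (fun t => 0 < t))^[2] (fun _ _ => (1:ℝ)) x y)) x y :=
      Qk_iter_mono hP hstepε k x y
    have h2' : (Qk P f (fun t => 0 < t))^[k]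
        (fun x y => C₆ * ((Qk P f (fun t => 0 < t))^[1] (fun _ _ => (1:ℝ)) x y
          - (Qk P f (fun t => 0 < t))^[2] (fun _ _ => (1:ℝ)) x y)) x y
        = C₆ * ((Qk P f (fun t => 0 < t))^[k+1] (fun _ _ => (1:ℝ)) x y
          - (Qk P f (fun t => 0 < t))^[k+2] (fun _ _ => (1:ℝ)) x y) := by
      rw [Qk_iter_smul_sub]
      rw [← Function.iterate_add_apply, ← Function.iterate_add_apply]
    rw [h2'] at h1'
    exact h1'
  -- telescoped bound on a_n
  have htel : ∀ (n : ℕ) (x : X) (y : ℝ),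
      (Qk P f (fun t => 0 < t))^[n+1] φa x y
        ≤ φa x y + εa x y
          + C₆ * ((Qk P f (fun t => 0 < t))^[1] (fun _ _ => (1:ℝ)) x y
            - (Qk P f (fun t => 0 < t))^[n+1] (fun _ _ => (1:ℝ)) x y) := by
    intro n
    induction n with
    | zero =>
      intro x y
      simp only [zero_add, Function.iterate_one]
      have e : εa x y = Qk P f (fun t => 0 < t) φa x y - φa x y := rfl
      rw [e]
      ring_nf
      exact le_rfl
    | succ n ih =>
      intro x y
      have hd : (Qk P f (fun t => 0 < t))^[n+2] φa x y
          - (Qk P f (fun t => 0 < t))^[n+1] φa x y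
          = (Qk P f (fun t => 0 < t))^[n+1] εa x y := by
        have e1 : (Qk P f (fun t => 0 < t))^[n+2] φa x y
            = (Qk P f (fun t => 0 < t))^[n+1] (Qk P f (fun t => 0 < t) φa) x y := by
          rw [← Function.iterate_succ_apply]
        have e2 : (Qk P f (fun t => 0 < t))^[n+1]
            (fun x y => Qk P f (fun t => 0 < t) φa x y - φa x y) x y
            = (Qk P f (fun t => 0 < t))^[n+1] (Qk P f (fun t => 0 < t) φa) x y
              - (Qk P f (fun t => 0 < t))^[n+1] φa x y := Qk_iter_sub _ _ _ x y
        have e3 : εa = fun x y => Qk P f (fun t => 0 < t) φa x y - φa x y := rfl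
        rw [e3, e2, e1]
      have h3' := hiterε n x y
      have h4' := ih x y
      linarith
  have hmaxsum : ∀ y : ℝ, y + max (-y) 0 = max y 0 := by
    intro y
    rcases le_total 0 y with hy | hy
    · rw [max_eq_right (by linarith : -y ≤ 0), max_eq_left hy]
      ring
    · rw [max_eq_left (by linarith : (0:ℝ) ≤ -y), max_eq_right hy]
      ring
  have habound : ∀ (n : ℕ) (x : X) (y : ℝ),
      (Qk P f (fun t => 0 < t))^[n] φa x y ≤ max y 0 + CA := by
    intro n x y
    have hφa_le : φa x y ≤ max y 0 := by
      have h2 : h x ≤ Bh := (abs_le.1 (hBh x)).2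
      have : y ≤ max y 0 := le_max_left _ _
      show y + h x - Bh ≤ max y 0
      linarith
    cases n with
    | zero =>
      show φa x y ≤ max y 0 + CA
      linarith
    | succ n =>
      have h1' := htel n x y
      have h2' := hεa_le x y
      have h3' := hp1 1 x y
      have h4' := hp0 (n+1) x y
      have h5' := hmaxsum y
      have h6' : φa x y = y + h x - Bh := rfl
      have h7 : h x ≤ Bh := (abs_le.1 (hBh x)).2
      rw [hCA]
      nlinarith
  -- definition of V
  set V : X → ℝ → ℝ := fun x y => ⨆ n, (Qk P f (fun t => 0 < t))^[n] φa x y with hV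
  have hbdd : ∀ x y, BddAbove (Set.range fun n => (Qk P f (fun t => 0 < t))^[n] φa x y) := by
    intro x y
    refine ⟨max y 0 + CA, ?_⟩
    rintro s ⟨n, rfl⟩
    exact habound n x y
  have hVtend : ∀ x y, Tendsto (fun n => (Qk P f (fun t => 0 < t))^[n] φa x y)
      atTop (𝓝 (V x y)) := by
    intro x y
    exact tendsto_atTop_ciSup (monotone_nat_of_le_succ (fun n => ha_mono n x y)) (hbdd x y)
  have hVle : ∀ x y, V x y ≤ max y 0 + CA := by
    intro x y
    exact ciSup_le (fun n => habound n x y)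
  have hVgea : ∀ (n : ℕ) (x : X) (y : ℝ), (Qk P f (fun t => 0 < t))^[n] φa x y ≤ V x y :=
    fun n x y => le_ciSup (hbdd x y) n
  -- b_n converges to V as well
  have hsubba : (fun (x' : X) (y' : ℝ) => φb x' y' - φa x' y')
      = (fun (x' : X) (_ : ℝ) => Bh - h x') := by
    funext x' y'
    show y' - (y' + h x' - Bh) = Bh - h x'
    ring
  have hbad : ∀ (n : ℕ) (x : X) (y : ℝ),
      (Qk P f (fun t => 0 < t))^[n] φb x y
        = (Qk P f (fun t => 0 < t))^[n] φa x y
          + (Qk P f (fun t => 0 < t))^[n] (fun (x' : X) (_ : ℝ) => Bh - h x') x y := by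
    intro n x y
    have := Qk_iter_sub (P := P) (f := f) (S := fun t => 0 < t) φb φa n x y
    rw [hsubba] at this
    linarith
  have hd0 : ∀ (n : ℕ) (x : X) (y : ℝ),
      0 ≤ (Qk P f (fun t => 0 < t))^[n] (fun (x' : X) (_ : ℝ) => Bh - h x') x y := by
    intro n x y
    apply Qk_iter_nonneg hP _ n x y
    intro x' y'
    have := (abs_le.1 (hBh x')).2
    linarith
  have hdle : ∀ (n : ℕ) (x : X) (y : ℝ),
      (Qk P f (fun t => 0 < t))^[n] (fun (x' : X) (_ : ℝ) => Bh - h x') x y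
        ≤ 2 * Bh * (Qk P f (fun t => 0 < t))^[n] (fun _ _ => (1:ℝ)) x y := by
    intro n x y
    have h1' : ∀ (x' : X) (y' : ℝ), (Bh - h x') ≤ 2 * Bh * 1 := by
      intro x' y'
      have := (abs_le.1 (hBh x')).1
      linarith
    calc (Qk P f (fun t => 0 < t))^[n] (fun (x' : X) (_ : ℝ) => Bh - h x') x y
        ≤ (Qk P f (fun t => 0 < t))^[n] (fun _ _ => 2 * Bh * (1:ℝ)) x y :=
          Qk_iter_mono hP (fun x' y' => h1' x' y') n x y
      _ = 2 * Bh * (Qk P f (fun t => 0 < t))^[n] (fun _ _ => (1:ℝ)) x y :=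
          Qk_iter_smul _ _ n x y
  have hdtend : ∀ x y, Tendsto
      (fun n => (Qk P f (fun t => 0 < t))^[n] (fun (x' : X) (_ : ℝ) => Bh - h x') x y)
      atTop (𝓝 0) := by
    intro x y
    apply squeeze_zero (fun n => hd0 n x y) (fun n => hdle n x y)
    have := (hptend x y).const_mul (2 * Bh)
    rwa [mul_zero] at this
  have hbtend : ∀ x y, Tendsto (fun n => (Qk P f (fun t => 0 < t))^[n] φb x y)
      atTop (𝓝 (V x y)) := by
    intro x y
    have := (hVtend x y).add (hdtend x y)
    rw [add_zero] at this
    have he : (fun n => (Qk P f (fun t => 0 < t))^[n] φa x y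
        + (Qk P f (fun t => 0 < t))^[n] (fun (x' : X) (_ : ℝ) => Bh - h x') x y)
        = fun n => (Qk P f (fun t => 0 < t))^[n] φb x y := by
      funext n
      rw [hbad]
    rwa [he] at this
  -- nonnegativity of V
  have hQφb0 : ∀ x y, 0 ≤ Qk P f (fun t => 0 < t) φb x y :=
    Qk_nonneg hP (fun x' y' hy' => le_of_lt hy')
  have hbpos : ∀ (n : ℕ) (x : X) (y : ℝ),
      0 ≤ (Qk P f (fun t => 0 < t))^[n+1] φb x y := by
    intro n x y
    rw [Function.iterate_succ_apply]
    exact Qk_iter_nonneg hP hQφb0 n x y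
  have hV0 : ∀ x y, 0 ≤ V x y := by
    intro x y
    have ht : Tendsto (fun n => (Qk P f (fun t => 0 < t))^[n+1] φb x y)
        atTop (𝓝 (V x y)) := (tendsto_add_atTop_iff_nat 1).2 (hbtend x y)
    exact ge_of_tendsto' ht (fun n => hbpos n x y)
  -- monotonicity of V in y
  have hQpres : ∀ (ψ : X → ℝ → ℝ), (∀ x y, 0 ≤ ψ x y) →
      (∀ x y y', y ≤ y' → ψ x y ≤ ψ x y') →
      (∀ x y y', y ≤ y' → Qk P f (fun t => 0 < t) ψ x y ≤ Qk P f (fun t => 0 < t) ψ x y') := by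
    intro ψ h0 hm x y y' hyy
    apply Finset.sum_le_sum
    intro x' _
    apply mul_le_mul_of_nonneg_left _ (hP x x')
    by_cases hs : 0 < y + f x'
    · have hs' : 0 < y' + f x' := by linarith
      rw [ind_of hs, ind_of hs', one_mul, one_mul]
      exact hm x' _ _ (by linarith)
    · rw [ind_of_not hs, zero_mul]
      by_cases hs' : 0 < y' + f x'
      · rw [ind_of hs', one_mul]
        exact h0 _ _
      · rw [ind_of_not hs', zero_mul]
  have hb1M : ∀ (n : ℕ), (∀ x y, 0 ≤ (Qk P f (fun t => 0 < t))^[n]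
        (Qk P f (fun t => 0 < t) φb) x y)
      ∧ (∀ x y y', y ≤ y' → (Qk P f (fun t => 0 < t))^[n] (Qk P f (fun t => 0 < t) φb) x y
        ≤ (Qk P f (fun t => 0 < t))^[n] (Qk P f (fun t => 0 < t) φb) x y') := by
    intro n
    induction n with
    | zero =>
      refine ⟨fun x y => hQφb0 x y, ?_⟩
      intro x y y' hyy
      apply Finset.sum_le_sum
      intro x' _
      apply mul_le_mul_of_nonneg_left _ (hP x x')
      by_cases hs : 0 < y + f x'
      · have hs' : 0 < y' + f x' := by linarith
        rw [ind_of hs, ind_of hs', one_mul, one_mul]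
        show y + f x' ≤ y' + f x'
        linarith
      · rw [ind_of_not hs, zero_mul]
        by_cases hs' : 0 < y' + f x'
        · rw [ind_of hs', one_mul]
          show (0:ℝ) ≤ y' + f x'
          linarith
        · rw [ind_of_not hs', zero_mul]
    | succ n ih =>
      constructor
      · intro x y
        rw [Function.iterate_succ_apply']
        exact Qk_nonneg hP (fun x' y' _ => ih.1 x' y') x y
      · intro x y y' hyy
        rw [Function.iterate_succ_apply']
        exact hQpres _ ih.1 (fun x'' a b hab => ih.2 x'' a b hab) x y y' hyy
  have hVmono : ∀ x : X, Monotone (V x) := by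
    intro x y y' hyy
    have ht1 : Tendsto (fun n => (Qk P f (fun t => 0 < t))^[n+1] φb x y)
        atTop (𝓝 (V x y)) := (tendsto_add_atTop_iff_nat 1).2 (hbtend x y)
    have ht2 : Tendsto (fun n => (Qk P f (fun t => 0 < t))^[n+1] φb x y')
        atTop (𝓝 (V x y')) := (tendsto_add_atTop_iff_nat 1).2 (hbtend x y')
    apply le_of_tendsto_of_tendsto' ht1 ht2
    intro n
    have := (hb1M n).2 x y y' hyy
    rw [Function.iterate_succ_apply]
    exact this
  -- harmonicity
  have hharm : ∀ (n : ℕ) (x : X) (y : ℝ),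
      (Qk P f (fun t => 0 < t))^[n] V x y = V x y := by
    intro n x y
    have ht1 : Tendsto (fun m => (Qk P f (fun t => 0 < t))^[n]
        ((Qk P f (fun t => 0 < t))^[m] φa) x y) atTop
        (𝓝 ((Qk P f (fun t => 0 < t))^[n] V x y)) :=
      Qk_iter_tendsto (fun x' y' => hVtend x' y') n x y
    have he : ∀ m, (Qk P f (fun t => 0 < t))^[n]
        ((Qk P f (fun t => 0 < t))^[m] φa) x y
        = (Qk P f (fun t => 0 < t))^[m + n] φa x y := by
      intro m
      rw [Nat.add_comm m n, Function.iterate_add_apply]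
    have ht2 : Tendsto (fun m => (Qk P f (fun t => 0 < t))^[m + n] φa x y)
        atTop (𝓝 (V x y)) := (tendsto_add_atTop_iff_nat n).2 (hVtend x y)
    rw [show (fun m => (Qk P f (fun t => 0 < t))^[n]
        ((Qk P f (fun t => 0 < t))^[m] φa) x y)
        = (fun m => (Qk P f (fun t => 0 < t))^[m + n] φa x y) from funext he] at ht1
    exact tendsto_nhds_unique ht1 ht2
  -- conclusion
  refine ⟨V, hV0, ?_, ?_, hVmono, ?_, ?_⟩
  · -- not identically zero
    refine ⟨Classical.arbitrary X, 2 * Bh + 1, ?_⟩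
    have hge := hVgea 0 (Classical.arbitrary X) (2 * Bh + 1)
    have h2 : -Bh ≤ h (Classical.arbitrary X) := (abs_le.1 (hBh _)).1
    have : (1:ℝ) ≤ V (Classical.arbitrary X) (2 * Bh + 1) := by
      have : φa (Classical.arbitrary X) (2 * Bh + 1)
          = 2 * Bh + 1 + h (Classical.arbitrary X) - Bh := rfl
      rw [Function.iterate_zero_apply] at hge
      linarith
    linarith
  · -- harmonicity
    intro x y n hn
    rw [Ex_eq_iter P f V n x y, hharm n x y]
  · -- linear growth
    refine ⟨CA + 1, by linarith, ?_⟩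
    intro x y
    have h1' := hVle x y
    have h2' : (0:ℝ) ≤ max y 0 := le_max_right _ _
    nlinarith
  · -- delta bounds
    intro δ hδ
    obtain ⟨hδ0, hδ1⟩ := hδ
    refine ⟨2 * Bh + CA + 1, by linarith, ?_⟩
    intro x y
    constructor
    · -- lower bound
      have hge := hVgea 0 x y
      rw [Function.iterate_zero_apply] at hge
      have h2 : -Bh ≤ h x := (abs_le.1 (hBh x)).1
      have h3 : φa x y = y + h x - Bh := rfl
      rcases le_total 0 y with hy | hy
      · rw [max_eq_left hy]
        have h4 : (1 - δ) * y ≤ y := by nlinarith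
        linarith
      · rw [max_eq_right hy]
        have := hV0 x y
        nlinarith
    · -- upper bound
      have h1' := hVle x y
      have h2' : (0:ℝ) ≤ max y 0 := le_max_right _ _
      nlinarith

end CLLT
end

section
/- (Duality) Assume Hypothesis 1. For every probability measure 𝔪 on 𝕏, every n ≥ 1 and every function F : 𝕏ⁿ → ℝ, 𝔼_𝔪( F(X₁, …, X_{n−1}, X_n) ) = 𝔼*_ν( F(X*_n, X*_{n−1}, …, X*₁) · 𝔪(X*_{n+1})/ν(X*_{n+1}) ), where 𝔼_𝔪 is the expectation for the chain (X_k) with X₀ distributed as 𝔪 and 𝔼*_ν is the expectation for the dual chain (X*_k) with X*₀ distributed as ν. -/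
open Finset Filter Real Topology MeasureTheory

namespace CLLT

variable {X : Type*}

section DualAux
variable {X : Type*}

/-- last element of `x :: l`. -/
def lastD (x : X) : List X → X
  | [] => x
  | y :: ys => lastD y ys

/-- reverse of `(x :: l).dropLast`. -/
def ri (x : X) : List X → List X
  | [] => []
  | y :: ys => ri y ys ++ [x]

lemma lastD_append_singleton (x b : X) (l : List X) : lastD x (l ++ [b]) = b := by
  induction l generalizing x with
  | nil => rfl
  | cons y ys ih => exact ih y

lemma wt_concat (P : X → X → ℝ) (x z : X) (l : List X) :
    wt P x (l ++ [z]) = wt P x l * P (lastD x l) z := by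
  induction l generalizing x with
  | nil => simp [wt, lastD]
  | cons y ys ih =>
    show P x y * wt P y (ys ++ [z]) = _
    rw [ih]; simp [wt, lastD]; ring

lemma lastD_ri (x : X) (l : List X) : lastD (lastD x l) (ri x l) = x := by
  induction l generalizing x with
  | nil => rfl
  | cons y ys ih => simp [lastD, ri, lastD_append_singleton]

lemma dual_wt (P : X → X → ℝ) (ν : X → ℝ) (hν : ∀ x, 0 < ν x) (l : List X) (x : X) :
    ν x * wt (dualK P ν) x l = ν (lastD x l) * wt P (lastD x l) (ri x l) := by
  induction l generalizing x with
  | nil => rfl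
  | cons y ys ih =>
    have hx := (hν x).ne'
    simp only [wt, lastD, ri, dualK, wt_concat, lastD_ri]
    rw [show ν x * (ν y * P y x / ν x * wt (dualK P ν) y ys)
        = P y x * (ν y * wt (dualK P ν) y ys) by field_simp, ih]
    ring

lemma lastD_ofFn (x : X) {k : ℕ} (q : Fin (k + 1) → X) :
    lastD x (List.ofFn q) = q (Fin.last k) := by
  rw [List.ofFn_succ', List.concat_eq_append, lastD_append_singleton]

lemma ri_eq (x : X) (l : List X) : ri x l = (x :: l).dropLast.reverse := by
  induction l generalizing x with
  | nil => rfl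
  | cons y ys ih =>
    show ri y ys ++ [x] = ((x :: y :: ys).dropLast).reverse
    rw [List.dropLast_cons₂, List.reverse_cons, ih]

lemma dropLast_ofFn {k : ℕ} (q : Fin (k + 1) → X) :
    (List.ofFn q).dropLast = List.ofFn (fun i : Fin k => q i.castSucc) := by
  rw [List.ofFn_succ', List.concat_eq_append, List.dropLast_concat]

end DualAux

/-- Lemma 3.2, duality. -/
theorem duality_formula [Fintype X] [DecidableEq X] [Nonempty X]
    (P : X → X → ℝ) (ν : X → ℝ) (hS : IsStochastic P ν) (h1 : Primitive P)
    (m : X → ℝ) (hm0 : ∀ x, 0 ≤ m x) (hm1 : ∑ x, m x = 1)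
    (n : ℕ) (hn : 1 ≤ n) (F : (Fin n → X) → ℝ) :
    ∑ x, m x * Ex P x n (fun ω => F (fun i => ω (i.1 + 1))) =
      ∑ x, ν x * Ex (dualK P ν) x (n + 1)
        (fun ω => F (fun i => ω (n - i.1)) * (m (ω (n + 1)) / ν (ω (n + 1)))) := by
  have hν := hS.nuPos
  obtain ⟨nn, rfl⟩ : ∃ k, n = k + 1 := ⟨n - 1, by omega⟩
  have hpe : ∀ (N : ℕ) (x : X) (q : Fin N → X) (k : ℕ) (h1 : 1 ≤ k) (h2 : k ≤ N),
      pathExt x q k = q ⟨k - 1, by omega⟩ := by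
    intro N x q k h1 h2
    simp only [pathExt]
    rw [dif_pos ⟨h1, h2⟩]
  -- rewrite the left-hand side as a sum over pairs
  have hLHS : ∑ x, m x * Ex P x (nn + 1) (fun ω => F fun i => ω (i.1 + 1))
      = ∑ z : X × (Fin (nn + 1) → X), m z.1 * (wt P z.1 (List.ofFn z.2) * F z.2) := by
    rw [Fintype.sum_prod_type]
    refine Finset.sum_congr rfl fun x _ => ?_
    rw [Ex, Finset.mul_sum]
    refine Finset.sum_congr rfl fun p _ => ?_
    have hF : (fun i : Fin (nn + 1) => pathExt x p (i.1 + 1)) = p := by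
      funext i
      rw [hpe (nn + 1) x p (i.1 + 1) (by omega) (by omega)]
      exact congrArg p (Fin.ext (by simp))
    rw [hF]
  -- rewrite the right-hand side as a sum over reversed paths
  have hRHS : ∑ x, ν x * Ex (dualK P ν) x ((nn + 1) + 1)
        (fun ω => F (fun i => ω ((nn + 1) - i.1)) * (m (ω ((nn + 1) + 1)) / ν (ω ((nn + 1) + 1))))
      = ∑ q : Fin ((nn + 1) + 1) → X,
          m (q (Fin.last (nn + 1))) *
            (wt P (q (Fin.last (nn + 1))) ((List.ofFn fun i : Fin (nn + 1) => q i.castSucc).reverse)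
              * F (fun i : Fin (nn + 1) => q ⟨(nn + 1) - 1 - i.1, by omega⟩)) := by
    simp only [Ex, Finset.mul_sum]
    rw [Finset.sum_comm]
    refine Finset.sum_congr rfl fun q _ => ?_
    set xl := q (Fin.last (nn + 1)) with hxl
    set RL := (List.ofFn fun i : Fin (nn + 1) => q i.castSucc).reverse with hRL
    have hC : ∀ x : X,
        (F (fun i : Fin (nn + 1) => pathExt x q ((nn + 1) - i.1)) *
          (m (pathExt x q ((nn + 1) + 1)) / ν (pathExt x q ((nn + 1) + 1))))
        = F (fun i : Fin (nn + 1) => q ⟨(nn + 1) - 1 - i.1, by omega⟩) * (m xl / ν xl) := by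
      intro x
      have h1 : pathExt x q ((nn + 1) + 1) = xl := by
        rw [hpe ((nn + 1) + 1) x q ((nn + 1) + 1) (by omega) (by omega), hxl]
        exact congrArg q (Fin.ext (by simp [Fin.last]))
      have h2 : (fun i : Fin (nn + 1) => pathExt x q ((nn + 1) - i.1))
          = fun i : Fin (nn + 1) => q ⟨(nn + 1) - 1 - i.1, by omega⟩ := by
        funext i
        have hi := i.isLt
        rw [hpe ((nn + 1) + 1) x q ((nn + 1) - i.1) (by omega) (by omega)]
        exact congrArg q (Fin.ext (by simp; omega))
      rw [h1, h2]
    have hof : List.ofFn q = q 0 :: List.ofFn (fun i => q i.succ) := List.ofFn_succ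
    have hri : ∀ x : X, ri x (List.ofFn q) = RL ++ [x] := by
      intro x
      rw [ri_eq, hof, List.dropLast_cons₂, List.reverse_cons, ← hof, dropLast_ofFn,
        ← hRL]
    have hlastRL : lastD xl RL = q 0 := by
      rw [hRL, List.ofFn_succ, List.reverse_cons, lastD_append_singleton]
      exact congrArg q (Fin.ext (by simp))
    have step : ∀ x : X,
        ν x * (wt (dualK P ν) x (List.ofFn q) *
          (F (fun i : Fin (nn + 1) => pathExt x q ((nn + 1) - i.1)) *
            (m (pathExt x q ((nn + 1) + 1)) / ν (pathExt x q ((nn + 1) + 1)))))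
        = (ν xl * (wt P xl RL *
            (F (fun i : Fin (nn + 1) => q ⟨(nn + 1) - 1 - i.1, by omega⟩) * (m xl / ν xl))))
          * P (q 0) x := by
      intro x
      rw [hC x, ← mul_assoc, dual_wt P ν hν, lastD_ofFn, ← hxl, hri, wt_concat,
        hlastRL]
      ring
    rw [Finset.sum_congr rfl fun x _ => step x, ← Finset.mul_sum, hS.rowSum, mul_one]
    have hxl0 : ν xl ≠ 0 := (hν xl).ne'
    field_simp
  rw [hLHS, hRHS]
  -- the reversal bijection
  refine (Fintype.sum_equiv
    (⟨fun q => (q (Fin.last (nn + 1)), fun i : Fin (nn + 1) => q ⟨(nn + 1) - 1 - i.1, by omega⟩),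
      fun z j => if h : (j : ℕ) < (nn + 1) then z.2 ⟨(nn + 1) - 1 - j.1, by omega⟩ else z.1,
      ?_, ?_⟩ : (Fin ((nn + 1) + 1) → X) ≃ X × (Fin (nn + 1) → X)) _ _ ?_).symm
  · intro q
    funext j
    by_cases h : (j : ℕ) < (nn + 1)
    · simp only [dif_pos h]
      exact congrArg q (Fin.ext (by simp; omega))
    · simp only [dif_neg h]
      exact congrArg q (Fin.ext (by have := j.isLt; simp [Fin.last]; omega))
  · intro z
    refine Prod.ext ?_ ?_
    · simp [Fin.last]
    · funext i
      have h : (nn + 1) - 1 - i.1 < (nn + 1) := by have := i.isLt; omega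
      simp only [dif_pos h]
      exact congrArg z.2 (Fin.ext (by have := i.isLt; simp; omega))
  · intro q
    simp only [Equiv.coe_fn_mk]
    have hlist : (List.ofFn fun i : Fin (nn + 1) => q i.castSucc).reverse
        = List.ofFn (fun i : Fin (nn + 1) => q ⟨(nn + 1) - 1 - i.1, by omega⟩) := by
      apply List.ext_getElem (by simp)
      intro i h1 h2
      simp only [List.getElem_reverse, List.getElem_ofFn, List.length_reverse,
        List.length_ofFn]
      exact congrArg q (Fin.ext (by simp))
    rw [hlist]
end CLLT
end

section
/- Assume Hypothesis 1. The following three statements are equivalent: (1) there exists (θ,a) ∈ ℝ² such that for every orbit x₀,…,x_n (i.e., every finite sequence with P(x₀,x₁)⋯P(x_{n−1},x_n)P(x_n,x₀) > 0), f(x₀)+⋯+f(x_n) − (n+1)θ ∈ aℤ; (2) there exist t ∈ ℝ∖{0}, a not identically zero function h : 𝕏 → ℂ, and θ ∈ ℝ such that for all (x,x') ∈ 𝕏², h(x')e^{itf(x')}P(x,x') = h(x)e^{itθ}P(x,x'); (3) there exists t ∈ ℝ∖{0} such that r_t = 1. -/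
open Finset Filter Real Topology MeasureTheory

namespace CLLT

variable {X : Type*}

section AuxLemmas

lemma alignment [Fintype X] {w : X → ℝ} {z : X → ℂ} {u : ℂ} {c : ℝ}
    (hw0 : ∀ x, 0 ≤ w x) (hw1 : ∑ x, w x = 1)
    (hz : ∀ x, ‖z x‖ ≤ c) (hu : ‖u‖ = c)
    (hsum : ∑ x, (w x : ℂ) * z x = u) :
    ∀ x, 0 < w x → z x = u := by
  have hc : 0 ≤ c := hu ▸ norm_nonneg u
  have hre : ∀ x, (z x * (starRingEnd ℂ) u).re ≤ c ^ 2 := by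
    intro x
    calc (z x * (starRingEnd ℂ) u).re ≤ ‖z x * (starRingEnd ℂ) u‖ :=
          Complex.re_le_norm _
      _ = ‖z x‖ * c := by rw [norm_mul, Complex.norm_conj, hu]
      _ ≤ c ^ 2 := by nlinarith [hz x, norm_nonneg (z x)]
  have h2 : ∑ x, w x * (z x * (starRingEnd ℂ) u).re = c ^ 2 := by
    have h3 : (∑ x, (w x : ℂ) * z x * (starRingEnd ℂ) u) = u * (starRingEnd ℂ) u := by
      rw [← Finset.sum_mul, hsum]
    have h4 := congrArg Complex.re h3
    rw [Complex.re_sum] at h4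
    have h5 : ∀ x : X, ((w x : ℂ) * z x * (starRingEnd ℂ) u).re
        = w x * (z x * (starRingEnd ℂ) u).re := by
      intro x; rw [mul_assoc, Complex.re_ofReal_mul]
    rw [Finset.sum_congr rfl (fun x _ => h5 x)] at h4
    rw [h4, Complex.mul_conj, Complex.ofReal_re, Complex.normSq_eq_norm_sq, hu]
  have hzero : ∑ x, w x * (c ^ 2 - (z x * (starRingEnd ℂ) u).re) = 0 := by
    simp only [mul_sub, Finset.sum_sub_distrib, h2, ← Finset.sum_mul, hw1]
    ring
  intro x hx
  have h0 : w x * (c ^ 2 - (z x * (starRingEnd ℂ) u).re) = 0 :=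
    (Finset.sum_eq_zero_iff_of_nonneg (fun y _ =>
      mul_nonneg (hw0 y) (by linarith [hre y]))).mp hzero x (Finset.mem_univ x)
  have hxre : (z x * (starRingEnd ℂ) u).re = c ^ 2 := by
    rcases mul_eq_zero.mp h0 with h | h
    · exact absurd h (ne_of_gt hx)
    · linarith
  have hn : Complex.normSq (z x - u) ≤ 0 := by
    rw [Complex.normSq_sub, hxre, Complex.normSq_eq_norm_sq, Complex.normSq_eq_norm_sq, hu]
    nlinarith [hz x, norm_nonneg (z x)]
  have := Complex.normSq_nonneg (z x - u)
  have : Complex.normSq (z x - u) = 0 := le_antisymm hn this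
  exact sub_eq_zero.mp (Complex.normSq_eq_zero.mp this)

lemma kpow_nonneg_s10 [Fintype X] [DecidableEq X] (P : X → X → ℝ)
    (hP0 : ∀ x x', 0 ≤ P x x') : ∀ k x y, 0 ≤ kpow P k x y
  | 0, x, y => by unfold kpow; positivity
  | (k+1), x, y => by
      unfold kpow
      exact Finset.sum_nonneg fun z _ =>
        mul_nonneg (hP0 x z) (kpow_nonneg_s10 P hP0 k z y)

lemma exists_walk [Fintype X] [DecidableEq X] (P : X → X → ℝ)
    (hP0 : ∀ x x', 0 ≤ P x x') :
    ∀ (k : ℕ) (x y : X), 0 < kpow P k x y →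
      ∃ w : ℕ → X, w 0 = x ∧ w k = y ∧ ∀ i < k, 0 < P (w i) (w (i+1)) := by
  intro k
  induction k with
  | zero =>
    intro x y h
    unfold kpow at h
    by_cases hxy : x = y
    · exact ⟨fun _ => x, rfl, hxy, by omega⟩
    · simp [hxy] at h
  | succ k ih =>
    intro x y h
    unfold kpow at h
    have : ∃ z, 0 < P x z * kpow P k z y := by
      by_contra hc
      push_neg at hc
      have : ∑ z, P x z * kpow P k z y ≤ 0 := Finset.sum_nonpos fun z _ => hc z
      linarith
    obtain ⟨z, hz⟩ := this
    have h1 : 0 < P x z := by nlinarith [kpow_nonneg_s10 P hP0 k z y, hP0 x z]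
    have h2 : 0 < kpow P k z y := by nlinarith [kpow_nonneg_s10 P hP0 k z y, hP0 x z]
    obtain ⟨w', hw0, hwk, hws⟩ := ih z y h2
    refine ⟨fun i => if i = 0 then x else w' (i - 1), rfl, by simp [hwk], ?_⟩
    intro i hi
    rcases Nat.eq_zero_or_pos i with rfl | hpos
    · simpa [hw0] using h1
    · have h3 : i ≠ 0 := by omega
      have h4 : i + 1 ≠ 0 := by omega
      simp only [h3, h4, if_false]
      have : i - 1 + 1 = i + 1 - 1 := by omega
      rw [show i + 1 - 1 = (i-1) + 1 by omega]
      exact hws (i - 1) (by omega)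

lemma walk_closure [Fintype X] [DecidableEq X] (P : X → X → ℝ)
    (hP0 : ∀ x x', 0 ≤ P x x') (h1 : Primitive P)
    (A : Set X) (hne : ∃ x, x ∈ A)
    (hstep : ∀ x x', x ∈ A → 0 < P x x' → x' ∈ A) : ∀ y, y ∈ A := by
  obtain ⟨x, hx⟩ := hne
  obtain ⟨k₀, hk₀, hpos⟩ := h1
  intro y
  obtain ⟨w, hw0, hwk, hws⟩ := exists_walk P hP0 k₀ x y (hpos x y)
  have key : ∀ i, i ≤ k₀ → w i ∈ A := by
    intro i
    induction i with
    | zero => intro _; rwa [hw0]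
    | succ j ihj => intro hj; exact hstep _ _ (ihj (by omega)) (hws j (by omega))
  rw [← hwk]; exact key k₀ le_rfl



lemma abs_expI (t r : ℝ) : ‖Complex.exp (Complex.I * (t:ℂ) * (r:ℂ))‖ = 1 := by
  rw [Complex.norm_exp]
  have : (Complex.I * (t:ℂ) * (r:ℂ)).re = 0 := by simp [Complex.mul_re]
  rw [this, Real.exp_zero]

lemma mem_spectrum_iff_eigen [Fintype X] [DecidableEq X] (M : Matrix X X ℂ) (κ : ℂ) :
    κ ∈ spectrum ℂ M ↔ ∃ v : X → ℂ, v ≠ 0 ∧ M.mulVec v = κ • v := by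
  rw [← AlgEquiv.spectrum_eq (Matrix.toLinAlgEquiv' : Matrix X X ℂ ≃ₐ[ℂ] _) M,
    ← Module.End.hasEigenvalue_iff_mem_spectrum]
  constructor
  · intro h
    obtain ⟨v, hv⟩ := h.exists_hasEigenvector
    refine ⟨v, hv.2, ?_⟩
    have := hv.apply_eq_smul
    rwa [Matrix.toLinAlgEquiv'_apply] at this
  · rintro ⟨v, hv0, hv⟩
    apply Module.End.hasEigenvalue_of_hasEigenvector (x := v)
    refine ⟨Module.End.mem_eigenspace_iff.mpr ?_, hv0⟩
    rwa [Matrix.toLinAlgEquiv'_apply]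

lemma eigen_abs_le [Fintype X] [Nonempty X] (P : X → X → ℝ) (f : X → ℝ)
    (hP0 : ∀ x x', 0 ≤ P x x') (hP1 : ∀ x, ∑ x', P x x' = 1) (t : ℝ)
    {κ : ℂ} {v : X → ℂ} (hv : v ≠ 0) (hev : (Pmat P f t).mulVec v = κ • v) :
    ‖κ‖ ≤ 1 := by
  obtain ⟨x, -, hx⟩ := Finset.exists_max_image Finset.univ (fun y => ‖v y‖)
    ⟨Classical.arbitrary X, Finset.mem_univ _⟩
  have hcpos : 0 < ‖v x‖ := by
    obtain ⟨y, hy⟩ := Function.ne_iff.mp hv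
    have : 0 < ‖v y‖ := by simpa [norm_pos_iff] using hy
    exact lt_of_lt_of_le this (hx y (Finset.mem_univ y))
  have hevx : κ * v x = ∑ x', (P x x' : ℂ) * Complex.exp (Complex.I * (t:ℂ) * (f x':ℂ)) * v x' := by
    have := congrFun hev x
    simp only [Matrix.mulVec, dotProduct, Pi.smul_apply, smul_eq_mul, Pmat, Matrix.of_apply] at this
    rw [← this]
  have hb : ‖κ‖ * ‖v x‖ ≤ 1 * ‖v x‖ := by
    rw [← norm_mul, hevx, one_mul]
    calc ‖∑ x', (P x x' : ℂ) * Complex.exp (Complex.I * (t:ℂ) * (f x':ℂ)) * v x'‖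
        ≤ ∑ x', ‖(P x x' : ℂ) * Complex.exp (Complex.I * (t:ℂ) * (f x':ℂ)) * v x'‖ :=
          norm_sum_le _ _
      _ ≤ ∑ x', P x x' * ‖v x‖ := by
          apply Finset.sum_le_sum
          intro x' _
          rw [norm_mul, norm_mul, abs_expI, Complex.norm_real, Real.norm_eq_abs, abs_of_nonneg (hP0 x x'), mul_one]
          exact mul_le_mul_of_nonneg_left (hx x' (Finset.mem_univ x')) (hP0 x x')
      _ = ‖v x‖ := by rw [← Finset.sum_mul, hP1, one_mul]
  exact le_of_mul_le_mul_right hb hcpos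

lemma pointwise_of_s2 {P : X → X → ℝ} {h : X → ℂ} {f : X → ℝ} {t θ : ℝ}
    (key : ∀ x x' : X,
      h x' * Complex.exp (Complex.I * (t : ℂ) * (f x' : ℂ)) * (P x x' : ℂ) =
        h x * Complex.exp (Complex.I * (t : ℂ) * (θ : ℂ)) * (P x x' : ℂ))
    {x x' : X} (hp : 0 < P x x') :
    h x' * Complex.exp (Complex.I * (t : ℂ) * (f x' : ℂ)) =
      h x * Complex.exp (Complex.I * (t : ℂ) * (θ : ℂ)) :=
  mul_right_cancel₀ (by exact_mod_cast ne_of_gt hp) (key x x')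

lemma h_ne_zero [Fintype X] [DecidableEq X] {P : X → X → ℝ} {h : X → ℂ} {f : X → ℝ} {t θ : ℝ}
    (hP0 : ∀ x x', 0 ≤ P x x') (h1 : Primitive P) (hh : h ≠ 0)
    (key : ∀ x x' : X, 0 < P x x' →
      h x' * Complex.exp (Complex.I * (t : ℂ) * (f x' : ℂ)) =
        h x * Complex.exp (Complex.I * (t : ℂ) * (θ : ℂ))) :
    ∀ x, h x ≠ 0 := by
  apply walk_closure P hP0 h1 {x | h x ≠ 0} (Function.ne_iff.mp hh)
  intro x x' hx hp
  have := key x x' hp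
  intro hx'
  rw [hx', zero_mul] at this
  exact (mul_ne_zero hx (Complex.exp_ne_zero _)) this.symm

lemma s1_of_s2 [Fintype X] [DecidableEq X] (P : X → X → ℝ) (f : X → ℝ)
    (hP0 : ∀ x x', 0 ≤ P x x') (h1 : Primitive P)
    (hyp : ∃ t : ℝ, t ≠ 0 ∧ ∃ h : X → ℂ, h ≠ 0 ∧ ∃ θ : ℝ, ∀ x x' : X,
        h x' * Complex.exp (Complex.I * (t : ℂ) * (f x' : ℂ)) * (P x x' : ℂ) =
          h x * Complex.exp (Complex.I * (t : ℂ) * (θ : ℂ)) * (P x x' : ℂ)) :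
    ∃ θ a : ℝ, ∀ (n : ℕ) (g : Fin (n + 1) → X),
        0 < ∏ i : Fin (n + 1), P (g i) (g (i + 1)) →
          ∃ m : ℤ, (∑ i, f (g i)) - (n + 1 : ℝ) * θ = a * (m : ℝ) := by
  obtain ⟨t, ht, h, hh, θ, key⟩ := hyp
  have key' : ∀ x x', 0 < P x x' →
      h x' * Complex.exp (Complex.I * (t : ℂ) * (f x' : ℂ)) =
        h x * Complex.exp (Complex.I * (t : ℂ) * (θ : ℂ)) :=
    fun x x' hp => pointwise_of_s2 key hp
  have hne := h_ne_zero hP0 h1 hh key'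
  refine ⟨θ, 2 * π / t, ?_⟩
  intro n g hg
  set S : ℝ := ∑ i, f (g i) with hS
  have hpos : ∀ i : Fin (n+1), 0 < P (g i) (g (i+1)) := by
    intro i
    rcases (hP0 (g i) (g (i+1))).lt_or_eq with h' | h'
    · exact h'
    · exfalso
      rw [Finset.prod_eq_zero (Finset.mem_univ i) h'.symm] at hg
      exact lt_irrefl 0 hg
  have hprod : ∏ i : Fin (n+1), (h (g (i+1)) * Complex.exp (Complex.I * (t:ℂ) * (f (g (i+1)) : ℂ)))
      = ∏ i : Fin (n+1), (h (g i) * Complex.exp (Complex.I * (t:ℂ) * (θ:ℂ))) :=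
    Finset.prod_congr rfl fun i _ => key' _ _ (hpos i)
  rw [Finset.prod_mul_distrib, Finset.prod_mul_distrib] at hprod
  have e1 : ∏ i : Fin (n+1), h (g (i+1)) = ∏ i : Fin (n+1), h (g i) :=
    Fintype.prod_equiv (Equiv.addRight 1) _ _ (fun i => rfl)
  rw [e1] at hprod
  have hH : ∏ i : Fin (n+1), h (g i) ≠ 0 :=
    Finset.prod_ne_zero_iff.mpr fun i _ => hne (g i)
  have hexp : ∏ i : Fin (n+1), Complex.exp (Complex.I * (t:ℂ) * (f (g (i+1)) : ℂ))
      = ∏ i : Fin (n+1), Complex.exp (Complex.I * (t:ℂ) * (θ:ℂ)) :=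
    mul_left_cancel₀ hH hprod
  rw [← Complex.exp_sum, ← Complex.exp_sum] at hexp
  obtain ⟨m, hm⟩ := Complex.exp_eq_exp_iff_exists_int.mp hexp
  refine ⟨m, ?_⟩
  have hsum1 : ∑ i : Fin (n+1), f (g (i+1)) = S :=
    Fintype.sum_equiv (Equiv.addRight 1) _ _ (fun i => rfl)
  have hL : ∑ i : Fin (n+1), Complex.I*(t:ℂ)*(f (g (i+1)):ℂ)
      = Complex.I * (((t * S) : ℝ):ℂ) := by
    rw [← Finset.mul_sum, ← Complex.ofReal_sum, hsum1]
    push_cast; ring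
  have hR : (∑ _i : Fin (n+1), Complex.I*(t:ℂ)*(θ:ℂ)) + (m:ℂ)*(2*(π:ℂ)*Complex.I)
      = Complex.I * (((t*((n+1)*θ) + 2*π*m) : ℝ):ℂ) := by
    rw [Finset.sum_const, Finset.card_univ, Fintype.card_fin]
    push_cast; ring
  rw [hL, hR] at hm
  have hre : t * S = t*((n+1)*θ) + 2*π*m :=
    Complex.ofReal_injective (mul_left_cancel₀ Complex.I_ne_zero hm)
  have hgoal : S - (n + 1 : ℝ) * θ = 2 * π / t * (m : ℝ) := by
    field_simp
    linarith [hre]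
  exact_mod_cast hgoal


lemma s3_of_s2 [Fintype X] [DecidableEq X] [Nonempty X] (P : X → X → ℝ) (f : X → ℝ)
    (hP0 : ∀ x x', 0 ≤ P x x') (hP1 : ∀ x, ∑ x', P x x' = 1) (h1 : Primitive P)
    (hyp : ∃ t : ℝ, t ≠ 0 ∧ ∃ h : X → ℂ, h ≠ 0 ∧ ∃ θ : ℝ, ∀ x x' : X,
        h x' * Complex.exp (Complex.I * (t : ℂ) * (f x' : ℂ)) * (P x x' : ℂ) =
          h x * Complex.exp (Complex.I * (t : ℂ) * (θ : ℂ)) * (P x x' : ℂ)) :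
    ∃ t : ℝ, t ≠ 0 ∧ spectralRadius ℂ (Pmat P f t) = 1 := by
  obtain ⟨t, ht, h, hh, θ, key⟩ := hyp
  refine ⟨t, ht, ?_⟩
  set μ : ℂ := Complex.exp (Complex.I * (t:ℂ) * (θ:ℂ)) with hμ
  have hev : (Pmat P f t).mulVec h = μ • h := by
    funext x
    simp only [Matrix.mulVec, dotProduct, Pmat, Matrix.of_apply, Pi.smul_apply,
      smul_eq_mul]
    calc ∑ x', (P x x' : ℂ) * Complex.exp (Complex.I * (t:ℂ) * (f x' : ℂ)) * h x'
        = ∑ x', h x * Complex.exp (Complex.I * (t:ℂ) * (θ:ℂ)) * (P x x' : ℂ) := by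
          refine Finset.sum_congr rfl fun x' _ => ?_
          rw [← key x x']; ring
      _ = μ * h x := by
          rw [← Finset.mul_sum, ← Complex.ofReal_sum, hP1]
          push_cast; ring
  have hμmem : μ ∈ spectrum ℂ (Pmat P f t) :=
    (mem_spectrum_iff_eigen _ μ).mpr ⟨h, hh, hev⟩
  have hμabs : ‖μ‖ = 1 := abs_expI t θ
  apply le_antisymm
  · rw [spectralRadius]
    apply iSup₂_le
    intro κ hκ
    obtain ⟨v, hv, hevv⟩ := (mem_spectrum_iff_eigen _ κ).mp hκ
    have habs := eigen_abs_le P f hP0 hP1 t hv hevv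
    have h2 : ‖κ‖₊ ≤ 1 := by
      rwa [← NNReal.coe_le_coe, coe_nnnorm, NNReal.coe_one]
    exact_mod_cast h2
  · rw [spectralRadius]
    refine le_iSup₂_of_le μ hμmem ?_
    have : ‖μ‖₊ = 1 := by
      ext; simp [coe_nnnorm, hμabs]
    rw [this]; simp

lemma s2_of_s3 [Fintype X] [DecidableEq X] [Nonempty X] (P : X → X → ℝ) (f : X → ℝ)
    (hP0 : ∀ x x', 0 ≤ P x x') (hP1 : ∀ x, ∑ x', P x x' = 1) (h1 : Primitive P)
    (hyp : ∃ t : ℝ, t ≠ 0 ∧ spectralRadius ℂ (Pmat P f t) = 1) :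
    ∃ t : ℝ, t ≠ 0 ∧ ∃ h : X → ℂ, h ≠ 0 ∧ ∃ θ : ℝ, ∀ x x' : X,
        h x' * Complex.exp (Complex.I * (t : ℂ) * (f x' : ℂ)) * (P x x' : ℂ) =
          h x * Complex.exp (Complex.I * (t : ℂ) * (θ : ℂ)) * (P x x' : ℂ) := by
  obtain ⟨t, ht, hrad⟩ := hyp
  set M := Pmat P f t with hM
  -- find μ in the spectrum with |μ| = 1
  have hfin : (spectrum ℂ M).Finite := M.finite_spectrum
  have hsup : spectralRadius ℂ M = hfin.toFinset.sup (fun k => (‖k‖₊ : ENNReal)) := by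
    rw [spectralRadius, Finset.sup_eq_iSup]
    apply le_antisymm
    · exact iSup₂_le fun k hk => le_iSup₂_of_le k (hfin.mem_toFinset.mpr hk) le_rfl
    · exact iSup₂_le fun k hk => le_iSup₂_of_le k (hfin.mem_toFinset.mp hk) le_rfl
  have hnonempty : hfin.toFinset.Nonempty := by
    by_contra hc
    rw [Finset.not_nonempty_iff_eq_empty] at hc
    rw [hsup, hc] at hrad
    simp at hrad
  obtain ⟨μ, hμmem, hμeq⟩ := Finset.exists_mem_eq_sup hfin.toFinset hnonempty
    (fun k => (‖k‖₊ : ENNReal))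
  have hμspec : μ ∈ spectrum ℂ M := hfin.mem_toFinset.mp hμmem
  have hμabs : ‖μ‖ = 1 := by
    have : (‖μ‖₊ : ENNReal) = 1 := by rw [← hμeq, ← hsup, hrad]
    have h2 : ‖μ‖₊ = 1 := by exact_mod_cast this
    have h3 : ‖μ‖ = 1 := by rw [← coe_nnnorm, h2]; simp
    exact h3
  obtain ⟨v, hv, hev⟩ := (mem_spectrum_iff_eigen M μ).mp hμspec
  -- maximum of |v|
  obtain ⟨x₀, -, hx₀⟩ := Finset.exists_max_image Finset.univ (fun y => ‖v y‖)
    ⟨Classical.arbitrary X, Finset.mem_univ _⟩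
  set c : ℝ := ‖v x₀‖ with hc
  have hcpos : 0 < c := by
    obtain ⟨y, hy⟩ := Function.ne_iff.mp hv
    have : 0 < ‖v y‖ := by simpa [norm_pos_iff] using hy
    exact lt_of_lt_of_le this (hx₀ y (Finset.mem_univ y))
  -- alignment at points of maximal modulus
  have halign : ∀ x, ‖v x‖ = c → ∀ x', 0 < P x x' →
      Complex.exp (Complex.I * (t:ℂ) * (f x' : ℂ)) * v x' = μ * v x := by
    intro x hx x' hp
    have hsum : ∑ y, ((P x y : ℝ) : ℂ) * (Complex.exp (Complex.I * (t:ℂ) * (f y : ℂ)) * v y)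
        = μ * v x := by
      have := congrFun hev x
      simp only [Matrix.mulVec, dotProduct, Pmat, Matrix.of_apply, Pi.smul_apply,
        smul_eq_mul, hM] at this
      rw [← this]
      exact Finset.sum_congr rfl fun y _ => by ring
    exact alignment (hP0 x) (hP1 x)
      (fun y => by
        rw [norm_mul, abs_expI, one_mul]
        exact hx₀ y (Finset.mem_univ y))
      (by rw [norm_mul, hμabs, one_mul, hx])
      hsum x' hp
  -- the set of maximal modulus is everything
  have hall : ∀ x, ‖v x‖ = c := by
    apply walk_closure P hP0 h1 {x | ‖v x‖ = c} ⟨x₀, rfl⟩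
    intro x x' hx hp
    have := halign x hx x' hp
    have h2 := congrArg (‖·‖) this
    rw [norm_mul, abs_expI, one_mul, norm_mul, hμabs, one_mul, hx] at h2
    exact h2
  -- θ from the argument of μ
  refine ⟨t, ht, v, hv, Complex.arg μ / t, ?_⟩
  have hμexp : Complex.exp (Complex.I * (t:ℂ) * ((Complex.arg μ / t : ℝ) : ℂ)) = μ := by
    have h4 : (t : ℂ) * ((Complex.arg μ / t : ℝ) : ℂ) = (Complex.arg μ : ℂ) := by
      have htc : (t:ℂ) ≠ 0 := by exact_mod_cast ht
      push_cast
      rw [mul_comm, div_mul_eq_mul_div, mul_div_assoc, div_self htc, mul_one]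
    rw [mul_assoc, h4]
    have := Complex.norm_mul_exp_arg_mul_I μ
    rw [hμabs] at this
    simpa [mul_comm] using this
  intro x x'
  rcases (hP0 x x').lt_or_eq with hp | hp
  · have := halign x (hall x) x' hp
    rw [hμexp]
    rw [show v x' * Complex.exp (Complex.I * (t:ℂ) * (f x' : ℂ))
        = Complex.exp (Complex.I * (t:ℂ) * (f x' : ℂ)) * v x' from mul_comm _ _, this]
    ring
  · rw [← hp]
    push_cast
    ring
lemma s2_of_s1 [Fintype X] [DecidableEq X] [Nonempty X] (P : X → X → ℝ) (f : X → ℝ)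
    (hP0 : ∀ x x', 0 ≤ P x x') (h1 : Primitive P)
    (hyp : ∃ θ a : ℝ, ∀ (n : ℕ) (g : Fin (n + 1) → X),
        0 < ∏ i : Fin (n + 1), P (g i) (g (i + 1)) →
          ∃ m : ℤ, (∑ i, f (g i)) - (n + 1 : ℝ) * θ = a * (m : ℝ)) :
    ∃ t : ℝ, t ≠ 0 ∧ ∃ h : X → ℂ, h ≠ 0 ∧ ∃ θ : ℝ, ∀ x x' : X,
        h x' * Complex.exp (Complex.I * (t : ℂ) * (f x' : ℂ)) * (P x x' : ℂ) =
          h x * Complex.exp (Complex.I * (t : ℂ) * (θ : ℂ)) * (P x x' : ℂ) := by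
  classical
  obtain ⟨θ, a, key0⟩ := hyp
  set a₀ : ℝ := if a = 0 then 1 else |a| with ha₀def
  have ha₀ : 0 < a₀ := by
    rw [ha₀def]
    by_cases h : a = 0
    · rw [if_pos h]; exact one_pos
    · rw [if_neg h]; exact abs_pos.mpr h
  have key : ∀ (n : ℕ) (g : Fin (n + 1) → X),
      0 < ∏ i : Fin (n + 1), P (g i) (g (i + 1)) →
        ∃ m : ℤ, (∑ i, f (g i)) - (n + 1 : ℝ) * θ = a₀ * (m : ℝ) := by
    intro n g hg
    obtain ⟨m, hm⟩ := key0 n g hg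
    by_cases h : a = 0
    · refine ⟨0, ?_⟩
      rw [ha₀def, if_pos h]
      rw [h, zero_mul] at hm
      simpa using hm
    · rcases abs_cases a with ⟨he, _⟩ | ⟨he, _⟩
      · exact ⟨m, by rw [ha₀def, if_neg h, he]; exact hm⟩
      · exact ⟨-m, by rw [ha₀def, if_neg h, he]; push_cast; linarith⟩
  obtain ⟨k₀, hk₁, hk⟩ := h1
  set x₀ : X := Classical.arbitrary X with hx₀
  have W : ∀ y : X, ∃ w : ℕ → X, w 0 = x₀ ∧ w k₀ = y ∧
      ∀ i < k₀, 0 < P (w i) (w (i+1)) :=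
    fun y => exists_walk P hP0 k₀ x₀ y (hk x₀ y)
  choose w hw0 hwk hws using W
  have V : ∀ y : X, ∃ v : ℕ → X, v 0 = y ∧ v k₀ = x₀ ∧
      ∀ i < k₀, 0 < P (v i) (v (i+1)) :=
    fun y => exists_walk P hP0 k₀ y x₀ (hk y x₀)
  choose v hv0 hvk hvs using V
  set D : X → ℝ := fun y => ∑ i ∈ Finset.range (k₀ + 1), f (w y i) with hDdef
  set G : X → ℝ := fun y => ∑ i ∈ Finset.range k₀, f (v y i) with hGdef
  -- any positive loop gives a lattice identity
  have loopKey : ∀ (n : ℕ) (u : ℕ → X), u (n + 1) = u 0 →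
      (∀ i < n + 1, 0 < P (u i) (u (i+1))) →
      ∃ m : ℤ, (∑ i ∈ Finset.range (n + 1), f (u i)) - (n + 1 : ℝ) * θ = a₀ * m := by
    intro n u huL hsteps
    obtain ⟨m, hm⟩ := key n (fun i : Fin (n+1) => u i) (by
      apply Finset.prod_pos
      intro i _
      show 0 < P (u (i : ℕ)) (u ((i + 1 : Fin (n+1)) : ℕ))
      have hvadd : ((i + 1 : Fin (n+1)) : ℕ) = ((i : ℕ) + 1 % (n+1)) % (n+1) := by
        rw [Fin.val_add, Fin.val_one']
      by_cases hi : (i : ℕ) < n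
      · have h1m : 1 % (n+1) = 1 := Nat.mod_eq_of_lt (by omega)
        have hv1 : ((i + 1 : Fin (n+1)) : ℕ) = (i : ℕ) + 1 := by
          rw [hvadd, h1m, Nat.mod_eq_of_lt (by omega)]
        rw [hv1]
        exact hsteps i (by omega)
      · have hin : (i : ℕ) = n := by omega
        have hv0' : ((i + 1 : Fin (n+1)) : ℕ) = 0 := by
          rcases Nat.eq_zero_or_pos n with rfl | hn
          · rw [hvadd]; simp
          · have h1m : 1 % (n+1) = 1 := Nat.mod_eq_of_lt (by omega)
            rw [hvadd, h1m, hin, Nat.mod_self]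
        rw [hv0', hin]
        have := hsteps n (by omega)
        rwa [huL] at this)
    refine ⟨m, ?_⟩
    rw [Fin.sum_univ_eq_sum_range (fun i => f (u i)) (n+1)] at hm
    exact hm
  -- Loop A : for each y, path x₀ → y → x₀
  have loopA : ∀ y : X, ∃ m : ℤ, (D y - f y + G y) - (2 * k₀ : ℝ) * θ = a₀ * m := by
    intro y
    set u : ℕ → X := fun i => if i ≤ k₀ then w y i else v y (i - k₀) with hu
    obtain ⟨n, hn⟩ : ∃ n, 2 * k₀ = n + 1 := ⟨2 * k₀ - 1, by omega⟩
    have hu0 : u 0 = x₀ := by simp [hu, hw0 y]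
    have huL : u (2 * k₀) = u 0 := by
      have h2 : ¬ (2 * k₀ ≤ k₀) := by omega
      simp only [hu, if_neg h2, hu0]
      rw [show 2 * k₀ - k₀ = k₀ by omega, hvk y, if_pos (Nat.zero_le _), hw0 y]
    have husteps : ∀ i < 2 * k₀, 0 < P (u i) (u (i+1)) := by
      intro i hi
      by_cases h2 : i + 1 ≤ k₀
      · simp only [hu, if_pos (by omega : i ≤ k₀), if_pos h2]
        exact hws y i (by omega)
      · have h3 : ¬ (i + 1 ≤ k₀) := h2
        have hui : u i = v y (i - k₀) := by
          by_cases h4 : i ≤ k₀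
          · have h5 : i = k₀ := by omega
            subst h5
            simp [hu, hwk y, hv0 y]
          · simp only [hu, if_neg h4]
        simp only [hu, if_neg h3] at *
        rw [hui, show i + 1 - k₀ = (i - k₀) + 1 by omega]
        exact hvs y (i - k₀) (by omega)
    have hsum : ∑ i ∈ Finset.range (2 * k₀), f (u i) = (D y - f y) + G y := by
      rw [show 2 * k₀ = k₀ + k₀ by ring, Finset.sum_range_add]
      congr 1
      · have hD2 : D y = (∑ i ∈ Finset.range k₀, f (w y i)) + f y := by
          simp only [hDdef]
          rw [Finset.sum_range_succ, hwk y]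
        rw [hD2]
        have hcongr : ∀ i ∈ Finset.range k₀, f (u i) = f (w y i) := by
          intro i hi
          rw [Finset.mem_range] at hi
          simp only [hu, if_pos (by omega : i ≤ k₀)]
        rw [Finset.sum_congr rfl hcongr]
        ring
      · refine Finset.sum_congr rfl fun i hi => ?_
        rw [Finset.mem_range] at hi
        rcases Nat.eq_zero_or_pos i with rfl | hipos
        · simp [hu, hwk y, hv0 y]
        · simp only [hu, if_neg (by omega : ¬ (k₀ + i ≤ k₀))]
          rw [show k₀ + i - k₀ = i by omega]
    obtain ⟨m, hm⟩ := loopKey n u (by rw [← hn]; exact huL) (by rw [← hn]; exact husteps)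
    refine ⟨m, ?_⟩
    rw [← hn] at hm
    rw [hsum] at hm
    have hnr : (2 * k₀ : ℝ) = (n : ℝ) + 1 := by exact_mod_cast congrArg (fun z : ℕ => (z : ℝ)) hn
    push_cast at hm hnr ⊢
    linear_combination hm - θ * hnr
  -- Loop B : along an edge x → x'
  have edge : ∀ x x', 0 < P x x' → ∃ m : ℤ, D x - D x' + f x' - θ = a₀ * m := by
    intro x x' hp
    set u : ℕ → X := fun i => if i ≤ k₀ then w x i else v x' (i - (k₀ + 1)) with hu
    have hu0 : u 0 = x₀ := by simp [hu, hw0 x]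
    have huL : u (2 * k₀ + 1) = u 0 := by
      have h2 : ¬ (2 * k₀ + 1 ≤ k₀) := by omega
      simp only [hu, if_neg h2]
      rw [show 2 * k₀ + 1 - (k₀ + 1) = k₀ by omega, hvk x', if_pos (Nat.zero_le _), hw0 x]
    have husteps : ∀ i < 2 * k₀ + 1, 0 < P (u i) (u (i+1)) := by
      intro i hi
      by_cases h2 : i + 1 ≤ k₀
      · simp only [hu, if_pos (by omega : i ≤ k₀), if_pos h2]
        exact hws x i (by omega)
      · by_cases h3 : i = k₀
        · simp only [hu, h3, if_pos le_rfl, if_neg (by omega : ¬ (k₀ + 1 ≤ k₀)), hwk x]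
          rw [show k₀ + 1 - (k₀ + 1) = 0 by omega, hv0 x']
          exact hp
        · have h4 : ¬ (i ≤ k₀) := by omega
          have h5 : ¬ (i + 1 ≤ k₀) := by omega
          simp only [hu, if_neg h4, if_neg h5]
          rw [show i + 1 - (k₀ + 1) = (i - (k₀ + 1)) + 1 by omega]
          exact hvs x' (i - (k₀ + 1)) (by omega)
    have hsum : ∑ i ∈ Finset.range (2 * k₀ + 1), f (u i) = D x + G x' := by
      rw [show 2 * k₀ + 1 = (k₀ + 1) + k₀ by ring, Finset.sum_range_add]
      congr 1
      · simp only [hDdef]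
        refine Finset.sum_congr rfl fun i hi => ?_
        rw [Finset.mem_range] at hi
        simp only [hu, if_pos (by omega : i ≤ k₀)]
      · simp only [hGdef]
        refine Finset.sum_congr rfl fun i hi => ?_
        simp only [hu, if_neg (by omega : ¬ (k₀ + 1 + i ≤ k₀))]
        rw [show k₀ + 1 + i - (k₀ + 1) = i by omega]
    obtain ⟨n, hn⟩ : ∃ n, 2 * k₀ + 1 = n + 1 := ⟨2 * k₀, rfl⟩
    obtain ⟨m₂, hm₂⟩ := loopKey n u (by rw [← hn]; exact huL) (by rw [← hn]; exact husteps)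
    rw [← hn, hsum] at hm₂
    obtain ⟨m₁, hm₁⟩ := loopA x'
    refine ⟨m₂ - m₁, ?_⟩
    have hnr : (2 * k₀ : ℝ) + 1 = (n : ℝ) + 1 := by exact_mod_cast congrArg (fun z : ℕ => (z : ℝ)) hn
    push_cast at hm₁ hm₂ hnr ⊢
    linear_combination hm₂ - hm₁ - θ * hnr
  -- construct t, h, θ
  refine ⟨2 * π / a₀, by positivity, ?_⟩
  set t : ℝ := 2 * π / a₀ with htdef
  have hta : t * a₀ = 2 * π := by
    rw [htdef]; field_simp
  refine ⟨fun y => Complex.exp (Complex.I * (t : ℂ) * (((k₀ : ℝ) * θ - D y : ℝ) : ℂ)),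
    fun He => Complex.exp_ne_zero _ (congrFun He x₀), θ, ?_⟩
  intro x x'
  rcases (hP0 x x').lt_or_eq with hp | hp
  · obtain ⟨m, hm⟩ := edge x x' hp
    have hrel : Complex.exp (Complex.I * (t : ℂ) * (((k₀ : ℝ) * θ - D x' : ℝ) : ℂ)) *
          Complex.exp (Complex.I * (t : ℂ) * (f x' : ℂ)) =
        Complex.exp (Complex.I * (t : ℂ) * (((k₀ : ℝ) * θ - D x : ℝ) : ℂ)) *
          Complex.exp (Complex.I * (t : ℂ) * (θ : ℂ)) := by
      rw [← Complex.exp_add, ← Complex.exp_add]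
      apply Complex.exp_eq_exp_iff_exists_int.mpr
      refine ⟨m, ?_⟩
      have hmC : ((D x - D x' + f x' - θ : ℝ) : ℂ) = (a₀ : ℂ) * (m : ℂ) := by
        exact_mod_cast congrArg (Complex.ofReal) hm
      have htaC : ((t : ℝ) : ℂ) * (a₀ : ℂ) = 2 * (π : ℂ) := by
        exact_mod_cast congrArg (Complex.ofReal) hta
      push_cast
      push_cast at hmC htaC
      linear_combination Complex.I * (t : ℂ) * hmC + (m : ℂ) * Complex.I * htaC
    rw [hrel]
  · rw [← hp]
    push_cast
    ring


end AuxLemmas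

/-- Lemma 4.1: characterization of the lattice case through the
perturbed operator. -/
theorem lattice_characterization [Fintype X] [DecidableEq X] [Nonempty X]
    (P : X → X → ℝ) (f : X → ℝ)
    (hP0 : ∀ x x', 0 ≤ P x x') (hP1 : ∀ x, ∑ x', P x x' = 1)
    (h1 : Primitive P) :
    ((∃ θ a : ℝ, ∀ (n : ℕ) (g : Fin (n + 1) → X),
        0 < ∏ i : Fin (n + 1), P (g i) (g (i + 1)) →
          ∃ m : ℤ, (∑ i, f (g i)) - (n + 1 : ℝ) * θ = a * (m : ℝ)) ↔
      (∃ t : ℝ, t ≠ 0 ∧ ∃ h : X → ℂ, h ≠ 0 ∧ ∃ θ : ℝ, ∀ x x' : X,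
        h x' * Complex.exp (Complex.I * (t : ℂ) * (f x' : ℂ)) * (P x x' : ℂ) =
          h x * Complex.exp (Complex.I * (t : ℂ) * (θ : ℂ)) * (P x x' : ℂ))) ∧
    ((∃ t : ℝ, t ≠ 0 ∧ ∃ h : X → ℂ, h ≠ 0 ∧ ∃ θ : ℝ, ∀ x x' : X,
        h x' * Complex.exp (Complex.I * (t : ℂ) * (f x' : ℂ)) * (P x x' : ℂ) =
          h x * Complex.exp (Complex.I * (t : ℂ) * (θ : ℂ)) * (P x x' : ℂ)) ↔
      (∃ t : ℝ, t ≠ 0 ∧ spectralRadius ℂ (Pmat P f t) = 1)) := by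
  constructor
  · exact ⟨fun hyp => s2_of_s1 P f hP0 h1 hyp, fun hyp => s1_of_s2 P f hP0 h1 hyp⟩
  · exact ⟨fun hyp => s3_of_s2 P f hP0 hP1 h1 hyp, fun hyp => s2_of_s3 P f hP0 hP1 h1 hyp⟩
end CLLT
end
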